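/- arXiv:math/0602664 — 5 statements merged into one kernel-verified Lean document; each statement's English description precedes it below -/
import Mathlib

section
/- There exists a constant K ≥ 1 such that τ(x + y) ≤ K(τ(x) + τ(y)) for all x, y ∈ ℝ^d. -/
open MeasureTheory Matrix Filter Topology

/-- For a real `d × d` matrix `E` and `c > 0`, `matPow E c = c^E = exp((log c) • E)`,
where `exp` is the matrix exponential. -/
noncomputable def matPow {d : ℕ} (E : Matrix (Fin d) (Fin d) ℝ) (c : ℝ) :
    Matrix (Fin d) (Fin d) ℝ :=
  NormedSpace.exp (Real.log c • E)

/-- The setup of Biermé–Meerschaert–Scheffler "Operator scaling stable random fields":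
a real `d × d` matrix `E` whose (complex) eigenvalues all have positive real part, the
distinct real parts of the eigenvalues being `a 0 < a 1 < ... < a (p-1)` (so `a ⟨0,_⟩ = a₁`
and `a ⟨p-1,_⟩ = a_p`); a norm `ν = ‖·‖₀` on `ℝ^d` adapted to `E`, so that every `x ≠ 0`
has a unique polar decomposition `x = τ(x)^E l(x)` with radial part `τ(x) > 0` and
direction `l(x)` on the unit sphere `S₀ = {θ | ν θ = 1}`;  `τ` is continuous with
`τ(0) = 0` and satisfies the scaling relation `τ(c^E x) = c τ(x)`. -/
structure OSSetup (d p : ℕ) : Type where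
  hd : 0 < d
  hp : 0 < p
  hpd : p ≤ d
  E : Matrix (Fin d) (Fin d) ℝ
  a : Fin p → ℝ
  a_pos : 0 < a ⟨0, hp⟩
  a_mono : StrictMono a
  spec_re : ∀ μ ∈ ((E.charpoly.map (algebraMap ℝ ℂ)).roots), ∃ i, μ.re = a i
  spec_re' : ∀ i, ∃ μ ∈ ((E.charpoly.map (algebraMap ℝ ℂ)).roots), μ.re = a i
  ν : (Fin d → ℝ) → ℝ
  ν_eq_zero : ∀ x, ν x = 0 ↔ x = 0
  ν_add : ∀ x y, ν (x + y) ≤ ν x + ν y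
  ν_smul : ∀ (c : ℝ) (x), ν (c • x) = |c| * ν x
  τ : (Fin d → ℝ) → ℝ
  l : (Fin d → ℝ) → (Fin d → ℝ)
  τ_zero : τ 0 = 0
  τ_pos : ∀ x, x ≠ 0 → 0 < τ x
  τ_cont : Continuous τ
  l_sphere : ∀ x, x ≠ 0 → ν (l x) = 1
  polar : ∀ x, x ≠ 0 → (matPow E (τ x)).mulVec (l x) = x
  polar_unique : ∀ (r : ℝ) (θ : Fin d → ℝ), 0 < r → ν θ = 1 →
    τ ((matPow E r).mulVec θ) = r ∧ l ((matPow E r).mulVec θ) = θ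
  τ_scaling : ∀ c > 0, ∀ x, τ ((matPow E c).mulVec x) = c * τ x

/-- `a₁`, the smallest real part of the eigenvalues of `E`. -/
noncomputable def OSSetup.a1 {d p : ℕ} (S : OSSetup d p) : ℝ := S.a ⟨0, S.hp⟩

/-- `a_p`, the largest real part of the eigenvalues of `E`. -/
noncomputable def OSSetup.ap {d p : ℕ} (S : OSSetup d p) : ℝ :=
  S.a ⟨p - 1, Nat.sub_lt S.hp Nat.one_pos⟩

/-- `φ` is `E`-homogeneous: `φ(c^E x) = c • φ(x)` for all `c > 0` and `x ≠ 0`. -/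
def OSSetup.EHomogeneous {d p : ℕ} (S : OSSetup d p) (φ : (Fin d → ℝ) → ℝ) : Prop :=
  ∀ c > 0, ∀ x : Fin d → ℝ, x ≠ 0 → φ ((matPow S.E c).mulVec x) = c * φ x

/-- `φ : ℝ^d → [0,∞)` is `(β,E)`-admissible: it is continuous, nonnegative, positive
off `0`, and for every `0 < A < B` there is `C > 0` with
`|φ(x+y) − φ(y)| ≤ C τ(x)^β` whenever `τ(x) ≤ 1` and `A ≤ ‖y‖ ≤ B`. -/
def OSSetup.Admissible {d p : ℕ} (S : OSSetup d p) (β : ℝ) (φ : (Fin d → ℝ) → ℝ) : Prop :=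
  0 < β ∧ Continuous φ ∧ (∀ x, 0 ≤ φ x) ∧ (∀ x, x ≠ 0 → 0 < φ x) ∧
    ∀ A B : ℝ, 0 < A → A < B → ∃ C > 0, ∀ x y : Fin d → ℝ,
      S.τ x ≤ 1 → A ≤ ‖y‖ → ‖y‖ ≤ B → |φ (x + y) - φ y| ≤ C * S.τ x ^ β

open Metric Set

private lemma matexp_cont {d : ℕ} :
    Continuous (fun A : Matrix (Fin d) (Fin d) ℝ => NormedSpace.exp A) := by
  letI : SeminormedRing (Matrix (Fin d) (Fin d) ℝ) := Matrix.linftyOpSemiNormedRing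
  letI : NormedRing (Matrix (Fin d) (Fin d) ℝ) := Matrix.linftyOpNormedRing
  letI : NormedAlgebra ℝ (Matrix (Fin d) (Fin d) ℝ) := Matrix.linftyOpNormedAlgebra
  letI : NormedAlgebra ℚ (Matrix (Fin d) (Fin d) ℝ) := Matrix.linftyOpNormedAlgebra
  exact NormedSpace.exp_continuous

private lemma matPow_one {d : ℕ} (E : Matrix (Fin d) (Fin d) ℝ) : matPow E 1 = 1 := by
  simp [matPow, Real.log_one]

private lemma matPow_mul_matPow_inv {d : ℕ} (E : Matrix (Fin d) (Fin d) ℝ) {c : ℝ} (hc : 0 < c) :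
    matPow E c * matPow E c⁻¹ = 1 := by
  have h : Commute (Real.log c • E) (Real.log c⁻¹ • E) :=
    ((Commute.refl E).smul_left _).smul_right _
  rw [matPow, matPow, ← Matrix.exp_add_of_commute _ _ h, ← add_smul, Real.log_inv,
    add_neg_cancel, zero_smul, NormedSpace.exp_zero]
private lemma nu_nonneg {d p : ℕ} (S : OSSetup d p) (x : Fin d → ℝ) : 0 ≤ S.ν x := by
  have h1 := S.ν_add x (-x)
  have h2 : S.ν (-x) = S.ν x := by
    have := S.ν_smul (-1) x
    simpa using this
  have h0 : S.ν 0 = 0 := (S.ν_eq_zero 0).mpr rfl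
  rw [add_neg_cancel, h0, h2] at h1
  linarith

private lemma nu_le {d p : ℕ} (S : OSSetup d p) : ∃ C : ℝ, 0 ≤ C ∧ ∀ z, S.ν z ≤ C * ‖z‖ := by
  classical
  refine ⟨∑ j : Fin d, S.ν (fun i => if j = i then 1 else 0), Finset.sum_nonneg fun j _ => nu_nonneg S _, fun z => ?_⟩
  have hz : z = ∑ j : Fin d, z j • (fun i => if j = i then 1 else 0 : Fin d → ℝ) := by
    ext i
    simp [Finset.sum_apply]
  calc S.ν z = S.ν (∑ j : Fin d, z j • (fun i => if j = i then 1 else 0 : Fin d → ℝ)) := by rw [← hz]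
    _ ≤ ∑ j : Fin d, S.ν (z j • (fun i => if j = i then 1 else 0 : Fin d → ℝ)) := by
        classical
        induction (Finset.univ : Finset (Fin d)) using Finset.cons_induction with
        | empty => simp [(S.ν_eq_zero 0).mpr rfl]
        | cons a s ha ih =>
            rw [Finset.sum_cons, Finset.sum_cons]
            exact le_trans (S.ν_add _ _) (by linarith [ih])
    _ ≤ ∑ j : Fin d, ‖z‖ * S.ν (fun i => if j = i then 1 else 0) := by
        refine Finset.sum_le_sum fun j _ => ?_
        rw [S.ν_smul]
        exact mul_le_mul_of_nonneg_right (le_trans (le_abs_self _) (by simpa using norm_le_pi_norm z j)) (nu_nonneg S _)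
    _ = (∑ j : Fin d, S.ν (fun i => if j = i then 1 else 0)) * ‖z‖ := by
        rw [Finset.sum_mul]; exact Finset.sum_congr rfl fun j _ => mul_comm _ _

private lemma nu_cont {d p : ℕ} (S : OSSetup d p) : Continuous S.ν := by
  obtain ⟨C, hC0, hC⟩ := nu_le S
  refine (LipschitzWith.of_dist_le_mul (K := C.toNNReal) fun x y => ?_).continuous
  rw [Real.coe_toNNReal C hC0, Real.dist_eq, dist_eq_norm]
  rw [abs_sub_le_iff]
  constructor
  · have h := S.ν_add (x - y) y
    rw [sub_add_cancel] at h
    linarith [hC (x - y)]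
  · have h := S.ν_add (y - x) x
    rw [sub_add_cancel] at h
    have h2 : S.ν (y - x) = S.ν (x - y) := by
      have := S.ν_smul (-1) (x - y)
      simpa [neg_sub] using this
    rw [h2] at h
    linarith [hC (x - y)]

private lemma nu_lower {d p : ℕ} (S : OSSetup d p) : ∃ m > 0, ∀ x, m * ‖x‖ ≤ S.ν x := by
  haveI : Nonempty (Fin d) := ⟨⟨0, S.hd⟩⟩
  obtain ⟨u0, hu0⟩ := exists_norm_eq (Fin d → ℝ) (zero_le_one)
  have hsne : (sphere (0 : Fin d → ℝ) 1).Nonempty := ⟨u0, by rwa [mem_sphere_zero_iff_norm]⟩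
  obtain ⟨u, hu, humin⟩ := (isCompact_sphere (0 : Fin d → ℝ) 1).exists_isMinOn hsne (nu_cont S).continuousOn
  rw [mem_sphere_zero_iff_norm] at hu
  have hune : u ≠ 0 := by intro h; rw [h, norm_zero] at hu; exact one_ne_zero hu.symm
  have hm : 0 < S.ν u := lt_of_le_of_ne (nu_nonneg S u) fun h => hune ((S.ν_eq_zero u).mp h.symm)
  refine ⟨S.ν u, hm, fun x => ?_⟩
  rcases eq_or_ne x 0 with rfl | hx
  · simp [(S.ν_eq_zero 0).mpr rfl]
  · have hxn : ‖x‖ ≠ 0 := norm_ne_zero_iff.mpr hx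
    set u' := ‖x‖⁻¹ • x with hu'
    have hu'n : ‖u'‖ = 1 := by
      rw [hu', norm_smul, norm_inv, norm_norm, inv_mul_cancel₀ hxn]
    have hle : S.ν u ≤ S.ν u' := humin (by rwa [mem_sphere_zero_iff_norm])
    have hx' : x = ‖x‖ • u' := by rw [hu', smul_smul, mul_inv_cancel₀ hxn, one_smul]
    calc S.ν u * ‖x‖ ≤ S.ν u' * ‖x‖ := mul_le_mul_of_nonneg_right hle (norm_nonneg x)
      _ = S.ν x := by
        conv_rhs => rw [hx', S.ν_smul]
        rw [abs_of_nonneg (norm_nonneg x)]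
        ring

private lemma preconn_compl_ball {d : ℕ} (hd : 2 ≤ d) {R : ℝ} (hR : 0 < R) :
    IsPreconnected {x : Fin d → ℝ | R < ‖x‖} := by
  have hrank : 1 < Module.rank ℝ (Fin d → ℝ) := by
    rw [rank_fin_fun]
    exact_mod_cast Nat.one_lt_cast.mpr hd
  have hsph : IsPathConnected (sphere (0 : Fin d → ℝ) (R + 1)) :=
    isPathConnected_sphere hrank 0 (by linarith)
  have hsub : sphere (0 : Fin d → ℝ) (R + 1) ⊆ {x : Fin d → ℝ | R < ‖x‖} := fun x hx => by
    rw [mem_sphere_zero_iff_norm] at hx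
    simp only [mem_setOf_eq, hx]
    linarith
  -- radial join: from x (with ‖x‖ > R) to its projection on the sphere of radius R+1
  have radial : ∀ x : Fin d → ℝ, R < ‖x‖ →
      JoinedIn {x : Fin d → ℝ | R < ‖x‖} x (((R + 1) / ‖x‖) • x) := by
    intro x hx
    have hxn : ‖x‖ ≠ 0 := (hR.trans hx).ne'
    have hseg : segment ℝ x (((R + 1) / ‖x‖) • x) ⊆ {x : Fin d → ℝ | R < ‖x‖} := by
      intro w hw
      rw [segment_eq_image] at hw
      obtain ⟨θ, hθ, rfl⟩ := hw
      obtain ⟨hθ0, hθ1⟩ := hθ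
      have hrw : (1 - θ) • x + θ • (((R + 1) / ‖x‖) • x)
          = ((1 - θ) + θ * ((R + 1) / ‖x‖)) • x := by
        rw [smul_smul, add_smul]
      simp only [mem_setOf_eq]
      rw [hrw, norm_smul, Real.norm_eq_abs]
      have hcnn : 0 ≤ (1 - θ) + θ * ((R + 1) / ‖x‖) :=
        add_nonneg (by linarith) (mul_nonneg hθ0 (div_nonneg (by linarith) (norm_nonneg x)))
      rw [abs_of_nonneg hcnn, add_mul, mul_assoc, div_mul_cancel₀ _ hxn]
      nlinarith [mul_nonneg (sub_nonneg.mpr hθ1) (sub_nonneg.mpr hx.le)]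
    have hconv : Convex ℝ (segment ℝ x (((R + 1) / ‖x‖) • x)) := convex_segment _ _
    have hpc : IsPathConnected (segment ℝ x (((R + 1) / ‖x‖) • x)) :=
      hconv.isPathConnected ⟨x, left_mem_segment ℝ _ _⟩
    exact (hpc.joinedIn x (left_mem_segment ℝ _ _) _ (right_mem_segment ℝ _ _)).mono hseg
  have hproj : ∀ x : Fin d → ℝ, R < ‖x‖ → ((R + 1) / ‖x‖) • x ∈ sphere (0 : Fin d → ℝ) (R + 1) := by
    intro x hx
    have hxn : ‖x‖ ≠ 0 := (hR.trans hx).ne'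
    rw [mem_sphere_zero_iff_norm, norm_smul, Real.norm_eq_abs,
      abs_of_nonneg (by positivity), div_mul_cancel₀ _ hxn]
  have : IsPathConnected {x : Fin d → ℝ | R < ‖x‖} := by
    obtain ⟨b, hb, -⟩ := id hsph
    rw [isPathConnected_iff]
    refine ⟨⟨b, hsub hb⟩, fun x hx y hy => ?_⟩
    rw [mem_setOf_eq] at hx hy
    exact ((radial x hx).trans
      (((hsph.joinedIn _ (hproj x hx) _ (hproj y hy))).mono hsub)).trans (radial y hy).symm
  exact this.isConnected.isPreconnected

private lemma tau_nonneg {d p : ℕ} (S : OSSetup d p) (x : Fin d → ℝ) : 0 ≤ S.τ x := by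
  rcases eq_or_ne x 0 with rfl | hx
  · rw [S.τ_zero]
  · exact (S.τ_pos x hx).le

private lemma tau_unit_bound {d p : ℕ} (S : OSSetup d p) :
    ∃ R > 0, ∀ x, S.τ x ≤ 1 → ‖x‖ ≤ R := by
  obtain ⟨m, hm, hmle⟩ := nu_lower S
  refine ⟨m⁻¹, inv_pos.mpr hm, ?_⟩
  by_contra hcon
  push_neg at hcon
  obtain ⟨x₀, hx₀τ, hx₀R⟩ := hcon
  have hτ1 : ∀ x, S.τ x = 1 → ‖x‖ ≤ m⁻¹ := by
    intro x h1
    have hxne : x ≠ 0 := by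
      intro h; rw [h, S.τ_zero] at h1; exact one_ne_zero h1.symm
    have hx := S.polar x hxne
    rw [h1, matPow_one, Matrix.one_mulVec] at hx
    have hν : S.ν x = 1 := by rw [← hx]; exact S.l_sphere x hxne
    have h2 := hmle x
    rw [hν] at h2
    have hminv : m * m⁻¹ = 1 := mul_inv_cancel₀ hm.ne'
    nlinarith
  have hx₀ne : x₀ ≠ 0 := by
    intro h
    rw [h, norm_zero] at hx₀R
    exact absurd hx₀R (not_lt.mpr (inv_nonneg.mpr hm.le))
  have hx₀lt : S.τ x₀ < 1 :=
    lt_of_le_of_ne hx₀τ fun h => absurd (hτ1 x₀ h) (not_le.mpr hx₀R)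
  have hτx₀pos : 0 < S.τ x₀ := S.τ_pos x₀ hx₀ne
  set θ := S.l x₀ with hθdef
  have hθν : S.ν θ = 1 := S.l_sphere x₀ hx₀ne
  obtain ⟨w, hwmem, hwmax⟩ := (isCompact_closedBall (0 : Fin d → ℝ) m⁻¹).exists_isMaxOn
    ⟨0, mem_closedBall_self (inv_nonneg.mpr hm.le)⟩ S.τ_cont.continuousOn
  set c : ℝ := max 1 (S.τ w) + 1 with hcdef
  have hc1 : 1 < c := by
    have := le_max_left 1 (S.τ w); rw [hcdef]; linarith
  have hcpos : 0 < c := lt_trans one_pos hc1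
  set z := (matPow S.E c).mulVec θ with hzdef
  have hzτ : S.τ z = c := (S.polar_unique c θ hcpos hθν).1
  have hzR : m⁻¹ < ‖z‖ := by
    by_contra hzb
    push_neg at hzb
    have h3 : S.τ z ≤ S.τ w := hwmax (by rwa [mem_closedBall_zero_iff])
    rw [hzτ] at h3
    have h4 := le_max_right 1 (S.τ w)
    rw [hcdef] at h3
    linarith
  have hz1 : 1 < S.τ z := by rw [hzτ]; exact hc1
  have key : ∀ C : Set (Fin d → ℝ), IsPreconnected C → (∀ x ∈ C, m⁻¹ < ‖x‖) →
      x₀ ∈ C → z ∈ C → False := by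
    intro C hC hCn hx₀C hzC
    have hsub : C ⊆ S.τ ⁻¹' (Iio 1) ∪ S.τ ⁻¹' (Ioi 1) := by
      intro x hx
      have hne1 : S.τ x ≠ 1 := fun h => absurd (hτ1 x h) (not_le.mpr (hCn x hx))
      rcases hne1.lt_or_gt with h | h
      · exact Or.inl h
      · exact Or.inr h
    obtain ⟨y, -, hy1, hy2⟩ := hC (S.τ ⁻¹' (Iio 1)) (S.τ ⁻¹' (Ioi 1))
      (isOpen_Iio.preimage S.τ_cont) (isOpen_Ioi.preimage S.τ_cont) hsub
      ⟨x₀, hx₀C, hx₀lt⟩ ⟨z, hzC, hz1⟩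
    simp only [mem_preimage, mem_Iio, mem_Ioi] at hy1 hy2
    linarith
  rcases le_or_gt 2 d with hd2 | hd2
  · exact key _ (preconn_compl_ball hd2 (inv_pos.mpr hm)) (fun x hx => hx) hx₀R hzR
  · -- dimension 1
    have hd0 := S.hd
    have hd1 : d = 1 := by omega
    set i0 : Fin d := ⟨0, hd0⟩ with hi0
    have hidx : ∀ i : Fin d, i = i0 := fun i => Fin.ext (by have := i.isLt; omega)
    have hnorm : ∀ x : Fin d → ℝ, ‖x‖ = |x i0| := by
      intro x
      refine le_antisymm ?_ ?_
      · refine (pi_norm_le_iff_of_nonneg (abs_nonneg _)).mpr fun i => ?_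
        rw [hidx i]; exact le_of_eq (Real.norm_eq_abs _)
      · rw [← Real.norm_eq_abs]; exact norm_le_pi_norm x i0
    have hzero : ∀ x : Fin d → ℝ, x i0 = 0 → x = 0 := by
      intro x h; funext i; rw [hidx i, h]; rfl
    set f : ℝ → ℝ := fun t => (matPow S.E t).mulVec θ i0 with hfdef
    have hgτ : ∀ t, 0 < t → S.τ ((matPow S.E t).mulVec θ) = t :=
      fun t ht => (S.polar_unique t θ ht hθν).1
    have hgne : ∀ t, 0 < t → f t ≠ 0 := by
      intro t ht h
      have h0 : (matPow S.E t).mulVec θ = 0 := hzero _ h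
      have h2 := hgτ t ht
      rw [h0, S.τ_zero] at h2
      exact ht.ne h2
    have hfa : f (S.τ x₀) = x₀ i0 := congrFun (S.polar x₀ hx₀ne) i0
    have hfc : f c = z i0 := rfl
    have hgcont : ContinuousOn f (Icc (S.τ x₀) c) := by
      have h1 : ContinuousOn (fun t : ℝ => Real.log t • S.E) (Icc (S.τ x₀) c) := by
        refine (Real.continuousOn_log.mono ?_).smul continuousOn_const
        intro t ht
        simp only [mem_compl_iff, mem_singleton_iff]
        exact ne_of_gt (lt_of_lt_of_le hτx₀pos ht.1)
      have h2 : Continuous (fun A : Matrix (Fin d) (Fin d) ℝ => A.mulVec θ i0) := by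
        simp only [Matrix.mulVec, dotProduct]
        exact continuous_finset_sum _ fun j _ =>
          (continuous_id.matrix_elem i0 j).mul continuous_const
      exact h2.comp_continuousOn (matexp_cont.comp_continuousOn h1)
    have hτx₀c : S.τ x₀ ≤ c := by linarith
    have hx₀i : x₀ i0 ≠ 0 := fun h => hx₀ne (hzero _ h)
    have hzi : z i0 ≠ 0 := hgne c hcpos
    have hsame : 0 < x₀ i0 * z i0 := by
      rcases hx₀i.lt_or_gt with hneg | hpos
      · rcases hzi.lt_or_gt with hzneg | hzpos
        · exact mul_pos_of_neg_of_neg hneg hzneg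
        · exfalso
          have h0 : (0 : ℝ) ∈ Icc (f (S.τ x₀)) (f c) := by
            rw [hfa, hfc]; exact ⟨hneg.le, hzpos.le⟩
          obtain ⟨t, ht, ht0⟩ := intermediate_value_Icc hτx₀c hgcont h0
          exact hgne t (lt_of_lt_of_le hτx₀pos ht.1) ht0
      · rcases hzi.lt_or_gt with hzneg | hzpos
        · exfalso
          have h0 : (0 : ℝ) ∈ Icc (f c) (f (S.τ x₀)) := by
            rw [hfa, hfc]; exact ⟨hzneg.le, hpos.le⟩
          obtain ⟨t, ht, ht0⟩ := intermediate_value_Icc' hτx₀c hgcont h0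
          exact hgne t (lt_of_lt_of_le hτx₀pos ht.1) ht0
        · exact mul_pos hpos hzpos
    set σ : ℝ := if 0 < x₀ i0 then 1 else -1 with hσdef
    have hσ1 : |σ| = 1 := by rw [hσdef]; split_ifs <;> simp
    have hσx₀ : σ * x₀ i0 = |x₀ i0| := by
      rcases hx₀i.lt_or_gt with h | h
      · rw [hσdef, if_neg (not_lt.mpr h.le), abs_of_neg h]; ring
      · rw [hσdef, if_pos h, abs_of_pos h]; ring
    have hσz : σ * z i0 = |z i0| := by
      rcases hx₀i.lt_or_gt with h | h
      · have hzneg : z i0 < 0 := by nlinarith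
        rw [hσdef, if_neg (not_lt.mpr h.le), abs_of_neg hzneg]; ring
      · have hzpos : 0 < z i0 := by nlinarith
        rw [hσdef, if_pos h, abs_of_pos hzpos]; ring
    have hlin : IsLinearMap ℝ (fun x : Fin d → ℝ => σ * x i0) :=
      { map_add := fun x y => by simp [mul_add]
        map_smul := fun r x => by simp [smul_eq_mul]; ring }
    refine key {x : Fin d → ℝ | m⁻¹ < σ * x i0}
      (convex_halfSpace_gt hlin m⁻¹).isPreconnected ?_ ?_ ?_
    · intro x hx
      rw [mem_setOf_eq] at hx
      have hle : σ * x i0 ≤ |x i0| := by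
        calc σ * x i0 ≤ |σ * x i0| := le_abs_self _
          _ = |σ| * |x i0| := abs_mul _ _
          _ = |x i0| := by rw [hσ1, one_mul]
      rw [hnorm x]; linarith
    · rw [mem_setOf_eq, hσx₀, ← hnorm]; exact hx₀R
    · rw [mem_setOf_eq, hσz, ← hnorm]; exact hzR


/-- Lemma 2.2: the radial part `τ` satisfies a quasi-triangle inequality. -/
theorem stmt_1 {d p : ℕ} (S : OSSetup d p) :
    ∃ K : ℝ, 1 ≤ K ∧ ∀ x y : Fin d → ℝ, S.τ (x + y) ≤ K * (S.τ x + S.τ y) := by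
  obtain ⟨R, hR, hRb⟩ := tau_unit_bound S
  obtain ⟨w, hwmem, hwmax⟩ := (isCompact_closedBall (0 : Fin d → ℝ) (2 * R)).exists_isMaxOn
    ⟨0, mem_closedBall_self (by linarith)⟩ S.τ_cont.continuousOn
  refine ⟨max 1 (S.τ w), le_max_left _ _, fun x y => ?_⟩
  rcases eq_or_ne (S.τ x + S.τ y) 0 with hs0 | hsne
  · have hx0 : S.τ x = 0 := le_antisymm (by linarith [tau_nonneg S x, tau_nonneg S y]) (tau_nonneg S x)
    have hy0 : S.τ y = 0 := by linarith [tau_nonneg S x]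
    have hx : x = 0 := by
      by_contra h; exact absurd hx0 (S.τ_pos x h).ne'
    have hy : y = 0 := by
      by_contra h; exact absurd hy0 (S.τ_pos y h).ne'
    rw [hx, hy, add_zero, S.τ_zero]
    simp [le_max_iff]
  · have hs : 0 < S.τ x + S.τ y :=
      lt_of_le_of_ne (by linarith [tau_nonneg S x, tau_nonneg S y]) (Ne.symm hsne)
    set s := S.τ x + S.τ y with hsdef
    have hsinv : 0 < s⁻¹ := inv_pos.mpr hs
    set x' := (matPow S.E s⁻¹).mulVec x with hx'def
    set y' := (matPow S.E s⁻¹).mulVec y with hy'def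
    have hx'τ : S.τ x' ≤ 1 := by
      rw [hx'def, S.τ_scaling s⁻¹ hsinv x]
      calc s⁻¹ * S.τ x ≤ s⁻¹ * s :=
        mul_le_mul_of_nonneg_left (by linarith [tau_nonneg S y]) hsinv.le
        _ = 1 := inv_mul_cancel₀ hs.ne'
    have hy'τ : S.τ y' ≤ 1 := by
      rw [hy'def, S.τ_scaling s⁻¹ hsinv y]
      calc s⁻¹ * S.τ y ≤ s⁻¹ * s :=
        mul_le_mul_of_nonneg_left (by linarith [tau_nonneg S x]) hsinv.le
        _ = 1 := inv_mul_cancel₀ hs.ne'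
    have hsum : ‖x' + y'‖ ≤ 2 * R := by
      calc ‖x' + y'‖ ≤ ‖x'‖ + ‖y'‖ := norm_add_le _ _
        _ ≤ R + R := add_le_add (hRb x' hx'τ) (hRb y' hy'τ)
        _ = 2 * R := by ring
    have hτsum : S.τ (x' + y') ≤ S.τ w := hwmax (by rwa [mem_closedBall_zero_iff])
    have hrecon : (matPow S.E s).mulVec (x' + y') = x + y := by
      rw [Matrix.mulVec_add, hx'def, hy'def, Matrix.mulVec_mulVec, Matrix.mulVec_mulVec,
        matPow_mul_matPow_inv S.E hs, Matrix.one_mulVec, Matrix.one_mulVec]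
    calc S.τ (x + y) = s * S.τ (x' + y') := by rw [← hrecon, S.τ_scaling s hs]
      _ ≤ s * max 1 (S.τ w) :=
        mul_le_mul_of_nonneg_left (le_trans hτsum (le_max_right _ _)) hs.le
      _ = max 1 (S.τ w) * (S.τ x + S.τ y) := by rw [hsdef]; ring
end

section
/- If φ : ℝ^d → [0,∞) is a continuous, E-homogeneous and (β,E)-admissible function, then β ≤ a₁, where a₁ is the smallest real part of the eigenvalues of E. -/
open MeasureTheory Matrix Filter Topology

section Auxiliary

open NormedSpace
open scoped Nat Real

lemma osaux_exists_eigenvector {d : ℕ} (E : Matrix (Fin d) (Fin d) ℝ) (μ : ℂ)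
    (hμ : μ ∈ (E.charpoly.map (algebraMap ℝ ℂ)).roots) :
    ∃ w : Fin d → ℂ, w ≠ 0 ∧ (E.map (algebraMap ℝ ℂ)) *ᵥ w = μ • w := by
  rw [← Matrix.charpoly_map] at hμ
  have hroot : ((E.map (algebraMap ℝ ℂ)).charpoly).IsRoot μ := (Polynomial.mem_roots'.mp hμ).2
  set M := E.map (algebraMap ℝ ℂ) with hM
  have hdet : (Matrix.diagonal (fun _ : Fin d => μ) - M).det = 0 := by
    have h1 : Polynomial.eval μ M.charpoly = (Matrix.diagonal (fun _ : Fin d => μ) - M).det := by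
      rw [Matrix.charpoly, ← Polynomial.coe_evalRingHom, RingHom.map_det]
      congr 1
      ext i j
      by_cases h : i = j <;>
        simp [h, Matrix.charmatrix_apply, Matrix.diagonal, Matrix.sub_apply]
    rw [← h1]
    exact hroot
  obtain ⟨v, hv0, hv⟩ := (Matrix.exists_mulVec_eq_zero_iff).mpr hdet
  refine ⟨v, hv0, ?_⟩
  rw [Matrix.sub_mulVec] at hv
  have h2 : (Matrix.diagonal (fun _ : Fin d => μ)) *ᵥ v = μ • v := by
    funext i
    simp [Matrix.mulVec_diagonal]
  rw [h2] at hv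
  exact (sub_eq_zero.mp hv).symm

lemma osaux_exp_mulVec_eigen {d : ℕ} (N : Matrix (Fin d) (Fin d) ℂ) {w : Fin d → ℂ} {z : ℂ}
    (h : N *ᵥ w = z • w) : (exp N) *ᵥ w = Complex.exp z • w := by
  letI : SeminormedRing (Matrix (Fin d) (Fin d) ℂ) := Matrix.linftyOpSemiNormedRing
  letI : NormedRing (Matrix (Fin d) (Fin d) ℂ) := Matrix.linftyOpNormedRing
  letI : NormedAlgebra ℂ (Matrix (Fin d) (Fin d) ℂ) := Matrix.linftyOpNormedAlgebra
  have hpow : ∀ n : ℕ, (N ^ n) *ᵥ w = (z ^ n) • w := by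
    intro n
    induction n with
    | zero => simp
    | succ n ih =>
      rw [pow_succ, ← Matrix.mulVec_mulVec, h, Matrix.mulVec_smul, ih, smul_smul, pow_succ]
      ring_nf
  let L : Matrix (Fin d) (Fin d) ℂ →ₗ[ℂ] (Fin d → ℂ) :=
    { toFun := fun M => M *ᵥ w
      map_add' := fun A B => Matrix.add_mulVec A B w
      map_smul' := fun r A => Matrix.smul_mulVec r A w }
  have hL : Continuous L := L.continuous_of_finiteDimensional
  have hsum : Summable (fun n : ℕ => (n !⁻¹ : ℂ) • N ^ n) := expSeries_summable' N
  have hmap : (exp N) *ᵥ w = ∑' n : ℕ, (n !⁻¹ : ℂ) • (N ^ n *ᵥ w) := by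
    have := (L.toContinuousLinearMap).map_tsum hsum
    simpa [exp_eq_tsum ℂ, L] using this
  rw [hmap]
  have heq : ∀ n : ℕ, (n !⁻¹ : ℂ) • (N ^ n *ᵥ w) = ((n !⁻¹ : ℂ) • z ^ n) • w := by
    intro n
    rw [hpow n, smul_smul, smul_eq_mul]
  rw [tsum_congr heq, Summable.tsum_smul_const ?_]
  · congr 1
    rw [Complex.exp_eq_exp_ℂ, exp_eq_tsum ℂ]
  · exact expSeries_summable' z

lemma osaux_matPow_map {d : ℕ} (E : Matrix (Fin d) (Fin d) ℝ) (c : ℝ) :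
    (matPow E c).map (algebraMap ℝ ℂ) =
      exp ((Real.log c : ℂ) • E.map (algebraMap ℝ ℂ)) := by
  letI : SeminormedRing (Matrix (Fin d) (Fin d) ℝ) := Matrix.linftyOpSemiNormedRing
  letI : NormedRing (Matrix (Fin d) (Fin d) ℝ) := Matrix.linftyOpNormedRing
  letI : NormedAlgebra ℝ (Matrix (Fin d) (Fin d) ℝ) := Matrix.linftyOpNormedAlgebra
  letI : SeminormedRing (Matrix (Fin d) (Fin d) ℂ) := Matrix.linftyOpSemiNormedRing
  letI : NormedRing (Matrix (Fin d) (Fin d) ℂ) := Matrix.linftyOpNormedRing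
  letI : NormedAlgebra ℝ (Matrix (Fin d) (Fin d) ℂ) := Matrix.linftyOpNormedAlgebra
  have hcont : Continuous ((algebraMap ℝ ℂ).mapMatrix :
      Matrix (Fin d) (Fin d) ℝ →+* Matrix (Fin d) (Fin d) ℂ) := by
    show Continuous fun M : Matrix (Fin d) (Fin d) ℝ => M.map (algebraMap ℝ ℂ)
    exact continuous_id.matrix_map (continuous_algebraMap ℝ ℂ)
  have h1 : (matPow E c).map (algebraMap ℝ ℂ)
      = (algebraMap ℝ ℂ).mapMatrix (exp (Real.log c • E)) := rfl
  rw [h1]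
  refine (map_exp_of_mem_ball (𝕂 := ℝ) ((algebraMap ℝ ℂ).mapMatrix) hcont (Real.log c • E)
    ((expSeries_radius_eq_top ℝ (Matrix (Fin d) (Fin d) ℝ)).symm ▸ edist_lt_top _ _)).trans ?_
  congr 1
  ext i j
  simp [RingHom.mapMatrix_apply, Matrix.map_apply, Matrix.smul_apply, smul_eq_mul,
    Complex.ofReal_mul]

lemma osaux_exp_real_of_im (L : ℝ) (μ : ℂ)
    (h : L * μ.im = 0 ∨ L * μ.im = 2 * π ∨ L * μ.im = -(2 * π)) :
    Complex.exp ((L : ℂ) * μ) = ((Real.exp (L * μ.re) : ℝ) : ℂ) := by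
  have hsplit : (L : ℂ) * μ = ((L * μ.re : ℝ) : ℂ) + ((L * μ.im : ℝ) : ℂ) * Complex.I := by
    nth_rewrite 1 [← Complex.re_add_im μ]
    push_cast
    ring
  rw [hsplit, Complex.exp_add, Complex.exp_mul_I, ← Complex.ofReal_cos, ← Complex.ofReal_sin]
  have hcos : Real.cos (L * μ.im) = 1 := by
    rcases h with h | h | h <;> rw [h] <;> simp [Real.cos_two_pi]
  have hsin : Real.sin (L * μ.im) = 0 := by
    rcases h with h | h | h <;> rw [h] <;> simp [Real.sin_two_pi]
  rw [hcos, hsin, Complex.ofReal_exp]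
  simp

lemma osaux_exists_good_c (μ : ℂ) :
    ∃ c : ℝ, 0 < c ∧ c < 1 ∧
      Complex.exp ((Real.log c : ℂ) * μ) = ((Real.exp (Real.log c * μ.re) : ℝ) : ℂ) := by
  by_cases hb : μ.im = 0
  · exact ⟨1/2, by norm_num, by norm_num, osaux_exp_real_of_im _ _ (by rw [hb]; simp)⟩
  · refine ⟨Real.exp (-(2 * π) / |μ.im|), Real.exp_pos _, ?_, osaux_exp_real_of_im _ _ ?_⟩
    · rw [Real.exp_lt_one_iff]
      have h1 : 0 < |μ.im| := abs_pos.mpr hb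
      have hπ : 0 < 2 * π := by positivity
      exact div_neg_of_neg_of_pos (by linarith) h1
    · rw [Real.log_exp]
      rcases abs_choice μ.im with h | h
      · right; right; rw [h]; field_simp
      · right; left; rw [h]; field_simp

lemma osaux_re_im_extract {d : ℕ} (M : Matrix (Fin d) (Fin d) ℝ) (w : Fin d → ℂ) (t : ℝ)
    (h : (M.map (algebraMap ℝ ℂ)) *ᵥ w = ((t : ℝ) : ℂ) • w) :
    M *ᵥ (fun i => (w i).re) = t • (fun i => (w i).re) ∧
    M *ᵥ (fun i => (w i).im) = t • (fun i => (w i).im) := by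
  constructor <;> funext i <;>
  · have hi := congrFun h i
    simp only [Matrix.mulVec, dotProduct, Matrix.map_apply, Pi.smul_apply,
      smul_eq_mul] at hi ⊢
    have hre := congrArg Complex.re hi
    have him := congrArg Complex.im hi
    simp only [Complex.re_sum, Complex.im_sum, Complex.mul_re, Complex.mul_im,
      Complex.ofReal_re, Complex.ofReal_im] at hre him
    first
    | simpa using hre
    | simpa using him

lemma osaux_exists_scaling_vector {d p : ℕ} (S : OSSetup d p) :
    ∃ (u : Fin d → ℝ) (c : ℝ), u ≠ 0 ∧ 0 < c ∧ c < 1 ∧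
      (matPow S.E c) *ᵥ u = (c ^ S.a1) • u := by
  obtain ⟨μ, hμroot, hμre⟩ := S.spec_re' ⟨0, S.hp⟩
  obtain ⟨w, hw0, hww⟩ := osaux_exists_eigenvector S.E μ hμroot
  obtain ⟨c, hc0, hc1, hcexp⟩ := osaux_exists_good_c μ
  have hre1 : μ.re = S.a1 := hμre
  have hmain : ((matPow S.E c).map (algebraMap ℝ ℂ)) *ᵥ w = ((c ^ S.a1 : ℝ) : ℂ) • w := by
    rw [osaux_matPow_map]
    have hN : ((Real.log c : ℂ) • S.E.map (algebraMap ℝ ℂ)) *ᵥ w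
        = ((Real.log c : ℂ) * μ) • w := by
      rw [Matrix.smul_mulVec, hww, smul_smul]
    rw [osaux_exp_mulVec_eigen _ hN, hcexp]
    congr 2
    rw [Real.rpow_def_of_pos hc0, hre1]
  obtain ⟨hre, him⟩ := osaux_re_im_extract (matPow S.E c) w (c ^ S.a1) hmain
  by_cases hu : (fun i => (w i).re) = (0 : Fin d → ℝ)
  · refine ⟨(fun i => (w i).im), c, ?_, hc0, hc1, him⟩
    intro h0
    apply hw0
    funext i
    have h1 := congrFun hu i
    have h2 := congrFun h0 i
    exact Complex.ext h1 h2
  · exact ⟨(fun i => (w i).re), c, hu, hc0, hc1, hre⟩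

end Auxiliary

/-- If `φ` is a continuous, `E`-homogeneous, `(β,E)`-admissible function, then `β ≤ a₁`. -/

theorem stmt_5 {d p : ℕ} (S : OSSetup d p) (β : ℝ) (φ : (Fin d → ℝ) → ℝ)
    (hhom : S.EHomogeneous φ) (hadm : S.Admissible β φ) : β ≤ S.a1 := by
  by_contra hcon
  push_neg at hcon
  obtain ⟨hβ, hφc, hφnn, hφpos, hadm5⟩ := hadm
  obtain ⟨u0, c, hu00, hc0, hc1, hscal0⟩ := osaux_exists_scaling_vector S
  set t : ℝ := c ^ S.a1 with ht_def
  have ha1 : 0 < S.a1 := S.a_pos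
  have ht0 : 0 < t := Real.rpow_pos_of_pos hc0 _
  have ht1 : t < 1 := Real.rpow_lt_one hc0.le hc1 ha1
  have hn0 : ‖u0‖ ≠ 0 := norm_ne_zero_iff.mpr hu00
  obtain ⟨u, hu, hu1, hscal⟩ : ∃ u : Fin d → ℝ, u ≠ 0 ∧ ‖u‖ = 1 ∧
      (matPow S.E c) *ᵥ u = t • u := by
    refine ⟨‖u0‖⁻¹ • u0, smul_ne_zero (inv_ne_zero hn0) hu00, ?_, ?_⟩
    · rw [norm_smul, norm_inv, norm_norm, inv_mul_cancel₀ hn0]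
    · rw [Matrix.mulVec_smul, hscal0, smul_comm]
  set s : ℝ := t⁻¹ with hs_def
  have hs1 : 1 < s := (one_lt_inv₀ ht0).mpr ht1
  obtain ⟨C, hC0, hC⟩ := hadm5 1 (s + 1) one_pos (by linarith)
  have hτu : 0 < S.τ u := S.τ_pos u hu
  have htau : ∀ m : ℕ, S.τ ((t ^ m) • u) = c ^ m * S.τ u := by
    intro m
    induction m with
    | zero => simp
    | succ m ih =>
      have h1 : (t ^ (m+1)) • u = (matPow S.E c) *ᵥ ((t ^ m) • u) := by
        rw [Matrix.mulVec_smul, hscal, smul_smul, ← pow_succ]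
      rw [h1, S.τ_scaling c hc0, ih, pow_succ]
      ring
  -- telescoping step
  have step : ∀ m : ℕ, c ^ m * S.τ u ≤ 1 → ∀ k : ℕ, (k : ℝ) * t ^ m ≤ s →
      |φ ((1 + (k : ℝ) * t ^ m) • u) - φ u| ≤ (k : ℝ) * (C * (c ^ m * S.τ u) ^ β) := by
    intro m hm k
    induction k with
    | zero => intro _; simp
    | succ k ih =>
      intro hk1
      push_cast at hk1 ⊢
      have htm0 : 0 < t ^ m := pow_pos ht0 m
      have hk : (k : ℝ) * t ^ m ≤ s := by nlinarith [htm0, (Nat.cast_nonneg k : (0:ℝ) ≤ k)]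
      have hkpos : (0:ℝ) ≤ (k : ℝ) * t ^ m := mul_nonneg (Nat.cast_nonneg k) htm0.le
      have hy : ‖((1 + (k : ℝ) * t ^ m) • u)‖ = 1 + (k : ℝ) * t ^ m := by
        rw [norm_smul, hu1, mul_one, Real.norm_eq_abs, abs_of_pos]
        linarith
      have hstep := hC ((t ^ m) • u) ((1 + (k : ℝ) * t ^ m) • u)
        (by rw [htau m]; exact hm) (by rw [hy]; linarith) (by rw [hy]; linarith)
      have hxy : (t ^ m) • u + (1 + (k : ℝ) * t ^ m) • u
          = (1 + ((k : ℝ) + 1) * t ^ m) • u := by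
        rw [← add_smul]; ring_nf
      rw [hxy, htau m] at hstep
      have hih := ih hk
      calc |φ ((1 + ((k : ℝ) + 1) * t ^ m) • u) - φ u|
          ≤ |φ ((1 + ((k : ℝ) + 1) * t ^ m) • u) - φ ((1 + (k : ℝ) * t ^ m) • u)|
            + |φ ((1 + (k : ℝ) * t ^ m) • u) - φ u| := abs_sub_le _ _ _
        _ ≤ C * (c ^ m * S.τ u) ^ β + (k : ℝ) * (C * (c ^ m * S.τ u) ^ β) := by
            exact add_le_add hstep hih
        _ = ((k : ℝ) + 1) * (C * (c ^ m * S.τ u) ^ β) := by ring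
  -- the sequence of endpoints
  set q : ℝ := c ^ (β - S.a1) with hq_def
  set r0 : ℝ := c ^ β with hr0_def
  have hq0 : 0 ≤ q := (Real.rpow_pos_of_pos hc0 _).le
  have hq1 : q < 1 := Real.rpow_lt_one hc0.le hc1 (by linarith)
  have hr00 : 0 ≤ r0 := (Real.rpow_pos_of_pos hc0 _).le
  have hr01 : r0 < 1 := Real.rpow_lt_one hc0.le hc1 hβ
  set km : ℕ → ℕ := fun m => ⌈(s - 1) / t ^ m⌉₊ with hkm_def
  set P : ℕ → (Fin d → ℝ) := fun m => (1 + (km m : ℝ) * t ^ m) • u with hP_def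
  have hfacts : ∀ m : ℕ, s - 1 ≤ (km m : ℝ) * t ^ m ∧ (km m : ℝ) * t ^ m ≤ s - 1 + t ^ m := by
    intro m
    have htm0 : 0 < t ^ m := pow_pos ht0 m
    constructor
    · have h1 : (s - 1) / t ^ m ≤ (km m : ℝ) := Nat.le_ceil _
      calc s - 1 = ((s - 1) / t ^ m) * t ^ m := by field_simp
        _ ≤ (km m : ℝ) * t ^ m := mul_le_mul_of_nonneg_right h1 htm0.le
    · have hnn : 0 ≤ (s - 1) / t ^ m := div_nonneg (by linarith) htm0.le
      have h2 : (km m : ℝ) < (s - 1) / t ^ m + 1 := Nat.ceil_lt_add_one hnn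
      have := mul_le_mul_of_nonneg_right h2.le htm0.le
      calc (km m : ℝ) * t ^ m ≤ ((s - 1) / t ^ m + 1) * t ^ m := this
        _ = s - 1 + t ^ m := by field_simp
  -- eventual bound
  have hev1 : ∀ᶠ m : ℕ in atTop, c ^ m * S.τ u < 1 := by
    have h := (tendsto_pow_atTop_nhds_zero_of_lt_one hc0.le hc1).mul_const (S.τ u)
    rw [zero_mul] at h
    exact h.eventually_lt_const one_pos
  have hEv : ∀ᶠ m : ℕ in atTop,
      ‖φ (P m) - φ u‖ ≤ C * S.τ u ^ β * ((s - 1) * q ^ m + r0 ^ m) := by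
    filter_upwards [hev1] with m hm
    have htm0 : 0 < t ^ m := pow_pos ht0 m
    have htm1 : t ^ m ≤ 1 := pow_le_one₀ ht0.le ht1.le
    obtain ⟨hge, hle⟩ := hfacts m
    have hvalid : (km m : ℝ) * t ^ m ≤ s := by linarith
    have hb := step m hm.le (km m) hvalid
    have hDpos : 0 ≤ C * (c ^ m * S.τ u) ^ β :=
      mul_nonneg hC0.le (Real.rpow_nonneg (mul_nonneg (pow_nonneg hc0.le m) hτu.le) β)
    have hkb : (km m : ℝ) ≤ (s - 1) / t ^ m + 1 := (Nat.ceil_lt_add_one (div_nonneg (by linarith) htm0.le)).le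
    have h3 : (km m : ℝ) * (C * (c ^ m * S.τ u) ^ β)
        ≤ ((s - 1) / t ^ m + 1) * (C * (c ^ m * S.τ u) ^ β) :=
      mul_le_mul_of_nonneg_right hkb hDpos
    have e1 : (c ^ m * S.τ u) ^ β = r0 ^ m * S.τ u ^ β := by
      rw [Real.mul_rpow (pow_nonneg hc0.le m) hτu.le]
      congr 1
      rw [← Real.rpow_natCast c m, ← Real.rpow_natCast r0 m, hr0_def,
        ← Real.rpow_mul hc0.le, ← Real.rpow_mul hc0.le, mul_comm]
    have e2 : r0 ^ m = q ^ m * t ^ m := by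
      rw [← mul_pow]
      congr 1
      rw [hr0_def, hq_def, ht_def, ← Real.rpow_add hc0]
      congr 1
      ring
    have e3 : ((s - 1) / t ^ m + 1) * (C * (c ^ m * S.τ u) ^ β)
        = C * S.τ u ^ β * ((s - 1) * q ^ m + r0 ^ m) := by
      rw [e1, e2]
      field_simp
    rw [Real.norm_eq_abs]
    calc |φ (P m) - φ u| ≤ (km m : ℝ) * (C * (c ^ m * S.τ u) ^ β) := hb
      _ ≤ ((s - 1) / t ^ m + 1) * (C * (c ^ m * S.τ u) ^ β) := h3
      _ = C * S.τ u ^ β * ((s - 1) * q ^ m + r0 ^ m) := e3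
  have hB : Tendsto (fun m : ℕ => C * S.τ u ^ β * ((s - 1) * q ^ m + r0 ^ m)) atTop (𝓝 0) := by
    have h1 := (tendsto_pow_atTop_nhds_zero_of_lt_one hq0 hq1).const_mul (s - 1)
    have h2 := tendsto_pow_atTop_nhds_zero_of_lt_one hr00 hr01
    have h3 := (h1.add h2).const_mul (C * S.τ u ^ β)
    simpa using h3
  have h2 : Tendsto (fun m : ℕ => φ (P m) - φ u) atTop (𝓝 0) := squeeze_zero_norm' hEv hB
  have hPs : Tendsto P atTop (𝓝 (s • u)) := by
    have hsc : Tendsto (fun m : ℕ => 1 + (km m : ℝ) * t ^ m) atTop (𝓝 s) := by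
      have hup : Tendsto (fun m : ℕ => s + t ^ m) atTop (𝓝 s) := by
        have := (tendsto_pow_atTop_nhds_zero_of_lt_one ht0.le ht1).const_add s
        simpa using this
      refine tendsto_of_tendsto_of_tendsto_of_le_of_le tendsto_const_nhds hup ?_ ?_
      · intro m; have := (hfacts m).1; dsimp only; linarith
      · intro m; have := (hfacts m).2; dsimp only; linarith
    exact hsc.smul_const u
  have h1 : Tendsto (fun m : ℕ => φ (P m) - φ u) atTop (𝓝 (φ (s • u) - φ u)) :=
    ((hφc.tendsto _).comp hPs).sub tendsto_const_nhds
  have hkey : φ (s • u) - φ u = 0 := tendsto_nhds_unique h1 h2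
  have hsu0 : s • u ≠ 0 := smul_ne_zero (by linarith) hu
  have hmul : (matPow S.E c) *ᵥ (s • u) = u := by
    rw [Matrix.mulVec_smul, hscal, smul_smul, hs_def, inv_mul_cancel₀ (ne_of_gt ht0), one_smul]
  have hh := hhom c hc0 (s • u) hsu0
  rw [hmul] at hh
  have hφu : 0 < φ u := hφpos u hu
  have hsu_eq : φ (s • u) = φ u := by linarith
  rw [hsu_eq] at hh
  nlinarith
end

section
/- If a continuous function φ : ℝ^d → [0,∞) is positive on ℝ^d \ {0} and Lipschitz on ℝ^d \ {0} (i.e. |φ(x) − φ(y)| ≤ C‖x − y‖₀ for some C > 0 and all nonzero x, y), then φ is (β,E)-admissible for every β with 0 < β < a₁. -/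
open MeasureTheory Matrix Filter Topology

open NormedSpace Polynomial Module Finset

namespace StmtSixAux

lemma term_le_exp (x : ℝ) (hx : 0 ≤ x) (j : ℕ) : x ^ j / j.factorial ≤ Real.exp x := by
  have h := Real.sum_le_exp_of_nonneg hx (j + 1)
  refine le_trans ?_ h
  have : ∀ i ∈ range (j+1), (0:ℝ) ≤ x ^ i / i.factorial := by
    intro i _; positivity
  simpa using Finset.single_le_sum this (by simp : j ∈ range (j+1))

lemma poly_exp_bound {δ : ℝ} (hδ : 0 < δ) (j : ℕ) {t : ℝ} (ht : t ≤ 0) :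
    |t| ^ j / j.factorial ≤ (2/δ) ^ j * Real.exp (-(δ/2) * t) := by
  have h1 : ((δ/2) * |t|) ^ j / j.factorial ≤ Real.exp ((δ/2) * |t|) :=
    term_le_exp _ (by positivity) j
  have h2 : (δ/2) * |t| = -(δ/2) * t := by rw [abs_of_nonpos ht]; ring
  rw [mul_pow, h2] at h1
  have h4 : (0:ℝ) < (δ/2) ^ j := by positivity
  have h5 : (2/δ) ^ j = ((δ/2) ^ j)⁻¹ := by rw [← inv_pow]; congr 1; field_simp
  rw [h5]
  calc |t| ^ j / j.factorial
      = ((δ/2) ^ j)⁻¹ * ((δ/2) ^ j * |t| ^ j / j.factorial) := by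
        rw [mul_div_assoc', inv_mul_cancel_left₀ (ne_of_gt h4)]
    _ ≤ ((δ/2) ^ j)⁻¹ * Real.exp (-(δ/2) * t) :=
        mul_le_mul_of_nonneg_left h1 (by positivity)

lemma eig_root {d : ℕ} (A : Matrix (Fin d) (Fin d) ℂ) (μ : ℂ) (v : Fin d → ℂ) (hv0 : v ≠ 0)
    (hv : v ∈ Module.End.maxGenEigenspace (Matrix.toLinAlgEquiv' A : Module.End ℂ (Fin d → ℂ)) μ) :
    μ ∈ A.charpoly.roots := by
  set f : Module.End ℂ (Fin d → ℂ) := (Matrix.toLinAlgEquiv' A : Module.End ℂ (Fin d → ℂ)) with hf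
  rw [Module.End.mem_maxGenEigenspace] at hv
  obtain ⟨k, hk⟩ := hv
  have hev : f.HasEigenvalue μ := by
    refine Module.End.hasEigenvalue_of_hasGenEigenvalue (k := k) ?_
    rw [Module.End.HasGenEigenvalue, Module.End.HasUnifEigenvalue, Submodule.ne_bot_iff]
    refine ⟨v, ?_, hv0⟩
    rw [Module.End.mem_genEigenspace]
    exact ⟨k, le_refl _, hk⟩
  have h2 : (minpoly ℂ f).IsRoot μ := Module.End.isRoot_of_hasEigenvalue hev
  rw [hf, minpoly.algEquiv_eq] at h2
  have h4 : A.charpoly.IsRoot μ := h2.dvd (A.minpoly_dvd_charpoly)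
  rw [Polynomial.mem_roots (A.charpoly_monic.ne_zero)]
  exact h4

lemma decay_pointwise {d : ℕ} (A : Matrix (Fin d) (Fin d) ℂ) (β : ℝ)
    (hroots : ∀ μ ∈ A.charpoly.roots, β < μ.re) (v : Fin d → ℂ) :
    ∃ C : ℝ, 0 ≤ C ∧ ∀ t : ℝ, t ≤ 0 →
      ‖(exp (t • A)).mulVec v‖ ≤ C * Real.exp (β * t) := by
  letI : NormedRing (Matrix (Fin d) (Fin d) ℂ) := Matrix.linftyOpNormedRing
  letI : NormedAlgebra ℂ (Matrix (Fin d) (Fin d) ℂ) := Matrix.linftyOpNormedAlgebra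
  let V : Submodule ℂ (Fin d → ℂ) :=
    { carrier := {v | ∃ C : ℝ, 0 ≤ C ∧ ∀ t : ℝ, t ≤ 0 →
        ‖(exp (t • A)).mulVec v‖ ≤ C * Real.exp (β * t)}
      add_mem' := by
        rintro x y ⟨C₁, hC₁, h₁⟩ ⟨C₂, hC₂, h₂⟩
        refine ⟨C₁ + C₂, by linarith, fun t ht => ?_⟩
        rw [Matrix.mulVec_add]
        calc ‖(exp (t • A)).mulVec x + (exp (t • A)).mulVec y‖
            ≤ ‖(exp (t • A)).mulVec x‖ + ‖(exp (t • A)).mulVec y‖ := norm_add_le _ _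
          _ ≤ C₁ * Real.exp (β * t) + C₂ * Real.exp (β * t) := add_le_add (h₁ t ht) (h₂ t ht)
          _ = (C₁ + C₂) * Real.exp (β * t) := by ring
      zero_mem' := ⟨0, le_refl _, fun t ht => by simp [Matrix.mulVec_zero]⟩
      smul_mem' := by
        rintro c x ⟨C, hC, h⟩
        refine ⟨‖c‖ * C, by positivity, fun t ht => ?_⟩
        rw [Matrix.mulVec_smul, norm_smul, mul_assoc]
        exact mul_le_mul_of_nonneg_left (h t ht) (norm_nonneg c) }
  suffices hV : ∀ w : Fin d → ℂ, w ∈ V by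
    obtain ⟨C, hC, h⟩ := hV v; exact ⟨C, hC, h⟩
  intro w
  have htop : (⊤ : Submodule ℂ (Fin d → ℂ)) ≤ V := by
    rw [← Module.End.iSup_maxGenEigenspace_eq_top
      (Matrix.toLinAlgEquiv' A : Module.End ℂ (Fin d → ℂ))]
    refine iSup_le fun μ => ?_
    intro v hv
    rcases eq_or_ne v 0 with rfl | hv0
    · exact V.zero_mem
    have hμ : β < μ.re := hroots μ (eig_root A μ v hv0 hv)
    set δ : ℝ := μ.re - β with hδdef
    have hδ : 0 < δ := by simp [hδdef]; linarith
    -- nilpotency exponent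
    rw [Module.End.mem_maxGenEigenspace] at hv
    obtain ⟨k, hk⟩ := hv
    set N : Matrix (Fin d) (Fin d) ℂ := A - μ • 1 with hN
    have hNk : (N ^ k).mulVec v = 0 := by
      have h1 : (Matrix.toLinAlgEquiv' (N ^ k) : Module.End ℂ (Fin d → ℂ))
          = ((Matrix.toLinAlgEquiv' A : Module.End ℂ (Fin d → ℂ)) - μ • 1) ^ k := by
        rw [map_pow, map_sub, _root_.map_smul, _root_.map_one]
      have h2 := congrArg (fun (g : Module.End ℂ (Fin d → ℂ)) => g v) h1
      have h3 : (Matrix.toLinAlgEquiv' (N ^ k) : Module.End ℂ (Fin d → ℂ)) v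
          = (N ^ k).mulVec v := Matrix.toLinAlgEquiv'_apply _ _
      rw [← h3]
      exact h2.trans hk
    -- the constant
    refine ⟨∑ j ∈ range k, ‖(N ^ j).mulVec v‖ * (2/δ) ^ j, by positivity, fun t ht => ?_⟩
    -- split the exponential
    have hts : t • A = ((t : ℂ) * μ) • (1 : Matrix (Fin d) (Fin d) ℂ) + (t : ℂ) • N := by
      have h0 : t • A = (t:ℂ) • A := by simp [Complex.coe_smul]
      rw [h0, hN, smul_sub, smul_smul]
      abel
    have hcomm : Commute (((t : ℂ) * μ) • (1 : Matrix (Fin d) (Fin d) ℂ)) ((t : ℂ) • N) :=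
      ((Commute.one_left _).smul_left _).smul_right _
    have hexp1 : exp (t • A)
        = exp (((t : ℂ) * μ) • (1 : Matrix (Fin d) (Fin d) ℂ)) * exp ((t : ℂ) • N) := by
      rw [hts, Matrix.exp_add_of_commute _ _ hcomm]
    have hexp2 : exp (((t : ℂ) * μ) • (1 : Matrix (Fin d) (Fin d) ℂ))
        = Complex.exp ((t : ℂ) * μ) • (1 : Matrix (Fin d) (Fin d) ℂ) := by
      have hcont : Continuous (algebraMap ℂ (Matrix (Fin d) (Fin d) ℂ)) :=
        (Algebra.linearMap ℂ (Matrix (Fin d) (Fin d) ℂ)).continuous_of_finiteDimensional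
      have h := map_exp (algebraMap ℂ (Matrix (Fin d) (Fin d) ℂ)) hcont ((t : ℂ) * μ)
      rw [← Algebra.algebraMap_eq_smul_one]
      refine h.symm.trans ?_
      rw [← Complex.exp_eq_exp_ℂ,
        Algebra.algebraMap_eq_smul_one]
    -- expansion of exp (t • N) applied to v
    let L : Matrix (Fin d) (Fin d) ℂ →ₗ[ℂ] (Fin d → ℂ) :=
      { toFun := fun M => M.mulVec v
        map_add' := fun M₁ M₂ => Matrix.add_mulVec _ _ _
        map_smul' := fun c M => by simpa using Matrix.smul_mulVec c M v }
    have hLcont : Continuous L := L.continuous_of_finiteDimensional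
    have hsum : Summable (fun j : ℕ => (j.factorial : ℂ)⁻¹ • ((t:ℂ) • N) ^ j) :=
      expSeries_summable' _
    have hexpand : (exp ((t:ℂ) • N)).mulVec v
        = ∑ j ∈ range k, ((j.factorial : ℂ)⁻¹ * (t:ℂ) ^ j) • (N ^ j).mulVec v := by
      have h1 : (exp ((t:ℂ) • N)).mulVec v
          = ∑' j : ℕ, L ((j.factorial : ℂ)⁻¹ • ((t:ℂ) • N) ^ j) := by
        rw [exp_eq_tsum ℂ]
        exact (hsum.hasSum.mapL (LinearMap.toContinuousLinearMap L)).tsum_eq.symm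
      rw [h1]
      have hterm : ∀ j : ℕ, L ((j.factorial : ℂ)⁻¹ • ((t:ℂ) • N) ^ j)
          = ((j.factorial : ℂ)⁻¹ * (t:ℂ) ^ j) • (N ^ j).mulVec v := by
        intro j
        show (((j.factorial : ℂ))⁻¹ • ((t:ℂ) • N) ^ j).mulVec v = _
        rw [_root_.smul_pow, smul_smul, Matrix.smul_mulVec]
      rw [tsum_congr hterm]
      refine tsum_eq_sum ?_
      intro j hj
      rw [mem_range, not_lt] at hj
      have : (N ^ j).mulVec v = 0 := by
        have : N ^ j = N ^ (j - k) * N ^ k := by rw [← pow_add]; congr 1; omega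
        rw [this, ← Matrix.mulVec_mulVec, hNk, Matrix.mulVec_zero]
      rw [this, smul_zero]
    -- put together
    have hfinal : (exp (t • A)).mulVec v
        = Complex.exp ((t : ℂ) * μ) • ∑ j ∈ range k,
            ((j.factorial : ℂ)⁻¹ * (t:ℂ) ^ j) • (N ^ j).mulVec v := by
      rw [hexp1, hexp2, ← hexpand, smul_mul_assoc, one_mul, Matrix.smul_mulVec]
    rw [hfinal, norm_smul]
    have hnexp : ‖Complex.exp ((t : ℂ) * μ)‖ = Real.exp (t * μ.re) := by
      rw [Complex.norm_exp]
      congr 1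
      simp [Complex.mul_re]
    rw [hnexp]
    calc Real.exp (t * μ.re) * ‖∑ j ∈ range k, ((j.factorial : ℂ)⁻¹ * (t:ℂ) ^ j) • (N ^ j).mulVec v‖
        ≤ Real.exp (t * μ.re) * ∑ j ∈ range k, (|t| ^ j / j.factorial) * ‖(N ^ j).mulVec v‖ := by
          refine mul_le_mul_of_nonneg_left ?_ (Real.exp_nonneg _)
          refine le_trans (norm_sum_le _ _) (Finset.sum_le_sum fun j _ => ?_)
          rw [norm_smul]
          refine mul_le_mul_of_nonneg_right (le_of_eq ?_) (norm_nonneg _)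
          rw [norm_mul, norm_inv, norm_pow, Complex.norm_natCast, Complex.norm_real,
            Real.norm_eq_abs, div_eq_inv_mul]
      _ ≤ Real.exp (t * μ.re) * ∑ j ∈ range k,
            ((2/δ) ^ j * Real.exp (-(δ/2) * t)) * ‖(N ^ j).mulVec v‖ := by
          refine mul_le_mul_of_nonneg_left (Finset.sum_le_sum fun j _ => ?_) (Real.exp_nonneg _)
          exact mul_le_mul_of_nonneg_right (poly_exp_bound hδ j ht) (norm_nonneg _)
      _ = (∑ j ∈ range k, ‖(N ^ j).mulVec v‖ * (2/δ) ^ j)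
            * (Real.exp (t * μ.re) * Real.exp (-(δ/2) * t)) := by
          rw [Finset.mul_sum, Finset.sum_mul]
          exact Finset.sum_congr rfl fun j _ => by ring
      _ ≤ (∑ j ∈ range k, ‖(N ^ j).mulVec v‖ * (2/δ) ^ j) * Real.exp (β * t) := by
          refine mul_le_mul_of_nonneg_left ?_ (by positivity)
          rw [← Real.exp_add]
          refine Real.exp_le_exp.2 ?_
          have : t * μ.re + -(δ/2) * t = β * t + (δ/2) * t := by rw [hδdef]; ring
          rw [this]
          nlinarith
  exact htop (Submodule.mem_top)

lemma decay_matrix (A : Matrix (Fin d) (Fin d) ℂ) (β : ℝ)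
    (hroots : ∀ μ ∈ A.charpoly.roots, β < μ.re) :
    ∃ C > 0, ∀ t : ℝ, t ≤ 0 → ∀ x : Fin d → ℂ,
      ‖(exp (t • A)).mulVec x‖ ≤ C * Real.exp (β * t) * ‖x‖ := by
  have e : Fin d → (Fin d → ℂ) := fun i => Pi.single i 1
  choose C hC0 hC using fun i : Fin d => decay_pointwise A β hroots (Pi.single i 1)
  refine ⟨∑ i, C i + 1, by
    have h := Finset.sum_nonneg (fun i (_ : i ∈ Finset.univ) => hC0 i); linarith,
    fun t ht x => ?_⟩
  have hx : x = ∑ i, x i • (Pi.single i 1 : Fin d → ℂ) := by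
    funext j
    rw [Finset.sum_apply]
    simp [Pi.single_apply, Finset.sum_ite_eq']
  have hsplit : (exp (t • A)).mulVec x
      = ∑ i, x i • (exp (t • A)).mulVec (Pi.single i 1) := by
    conv_lhs => rw [hx]
    rw [← Matrix.mulVecLin_apply]
    rw [map_sum]
    refine Finset.sum_congr rfl fun i _ => ?_
    rw [_root_.map_smul, Matrix.mulVecLin_apply]
  rw [hsplit]
  calc ‖∑ i, x i • (exp (t • A)).mulVec (Pi.single i 1)‖
      ≤ ∑ i, ‖x i • (exp (t • A)).mulVec (Pi.single i 1)‖ := norm_sum_le _ _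
    _ ≤ ∑ i, ‖x‖ * (C i * Real.exp (β * t)) := by
        refine Finset.sum_le_sum fun i _ => ?_
        rw [norm_smul]
        exact mul_le_mul (norm_le_pi_norm x i) (hC i t ht) (norm_nonneg _) (norm_nonneg _)
    _ = (∑ i, C i) * Real.exp (β * t) * ‖x‖ := by
        rw [← Finset.mul_sum, ← Finset.sum_mul]
        ring
    _ ≤ (∑ i, C i + 1) * Real.exp (β * t) * ‖x‖ := by
        have h1 : (∑ i, C i) ≤ ∑ i, C i + 1 := by linarith
        have h2 : (0:ℝ) ≤ Real.exp (β * t) * ‖x‖ := by positivity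
        calc (∑ i, C i) * Real.exp (β * t) * ‖x‖
            = (∑ i, C i) * (Real.exp (β * t) * ‖x‖) := by ring
          _ ≤ (∑ i, C i + 1) * (Real.exp (β * t) * ‖x‖) := mul_le_mul_of_nonneg_right h1 h2
          _ = (∑ i, C i + 1) * Real.exp (β * t) * ‖x‖ := by ring

variable {d p : ℕ}

lemma decay_real (S : OSSetup d p) {β : ℝ} (hβ : β < S.a1) :
    ∃ C > 0, ∀ c : ℝ, 0 < c → c ≤ 1 → ∀ x : Fin d → ℝ,
      ‖(matPow S.E c).mulVec x‖ ≤ C * c ^ β * ‖x‖ := by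
  set A : Matrix (Fin d) (Fin d) ℂ := S.E.map (algebraMap ℝ ℂ) with hA
  have hroots : ∀ μ ∈ A.charpoly.roots, β < μ.re := by
    intro μ hμ
    rw [hA, Matrix.charpoly_map] at hμ
    obtain ⟨i, hi⟩ := S.spec_re μ hμ
    have h1 : S.a1 ≤ S.a i := by
      rcases eq_or_ne (⟨0, S.hp⟩ : Fin p) i with rfl | hne
      · exact le_refl _
      · exact le_of_lt (S.a_mono (lt_of_le_of_ne (by simp [Fin.le_def]) hne))
    rw [hi]
    exact lt_of_lt_of_le hβ h1
  obtain ⟨C, hC, h⟩ := decay_matrix A β hroots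
  refine ⟨C, hC, fun c hc hc1 x => ?_⟩
  set t : ℝ := Real.log c with htdef
  have ht : t ≤ 0 := Real.log_nonpos (le_of_lt hc) hc1
  have hmap : ((matPow S.E c).map (algebraMap ℝ ℂ)) = exp (t • A) := by
    simp only [matPow]
    let f : Matrix (Fin d) (Fin d) ℝ →ₐ[ℝ] Matrix (Fin d) (Fin d) ℂ :=
      (Algebra.ofId ℝ ℂ).mapMatrix
    have hf : Continuous f := f.toLinearMap.continuous_of_finiteDimensional
    letI : NormedRing (Matrix (Fin d) (Fin d) ℝ) := Matrix.linftyOpNormedRing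
    letI : NormedAlgebra ℝ (Matrix (Fin d) (Fin d) ℝ) := Matrix.linftyOpNormedAlgebra
    letI : NormedRing (Matrix (Fin d) (Fin d) ℂ) := Matrix.linftyOpNormedRing
    letI : NormedAlgebra ℝ (Matrix (Fin d) (Fin d) ℂ) := Matrix.linftyOpNormedAlgebra
    letI : NormedAlgebra ℚ (Matrix (Fin d) (Fin d) ℝ) := NormedAlgebra.restrictScalars ℚ ℝ _
    have := map_exp f hf (t • S.E)
    simp [f, AlgHom.mapMatrix_apply, hA, ← htdef,
      (show ⇑(Algebra.ofId ℝ ℂ) = Complex.ofReal from funext fun r => rfl)] at this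
    exact this
  have hvec : ((matPow S.E c).map (algebraMap ℝ ℂ)).mulVec (fun i => ((x i : ℝ) : ℂ))
      = fun i => ((((matPow S.E c).mulVec x) i : ℝ) : ℂ) := by
    funext i
    simp [Matrix.mulVec, dotProduct, Matrix.map_apply]
  have hnorm : ∀ y : Fin d → ℝ, ‖(fun i => ((y i : ℝ) : ℂ))‖ = ‖y‖ := by
    intro y
    simp [Pi.norm_def, Complex.nnnorm_real]
  have h1 : ‖(matPow S.E c).mulVec x‖ ≤ C * Real.exp (β * t) * ‖x‖ := by
    have h2 := h t ht (fun i => ((x i : ℝ) : ℂ))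
    rw [← hmap, hvec, hnorm ((matPow S.E c).mulVec x), hnorm x] at h2
    exact h2
  have h3 : c ^ β = Real.exp (β * t) := by
    rw [Real.rpow_def_of_pos hc, mul_comm]
  rw [h3]
  exact h1

lemma nu_nonneg (S : OSSetup d p) (x : Fin d → ℝ) : 0 ≤ S.ν x := by
  have h0 : S.ν 0 = 0 := (S.ν_eq_zero 0).2 rfl
  have h1 : S.ν (x + (-1 : ℝ) • x) ≤ S.ν x + S.ν ((-1 : ℝ) • x) := S.ν_add _ _
  rw [S.ν_smul] at h1
  simp at h1
  rw [h0] at h1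
  linarith

lemma nu_upper (S : OSSetup d p) : ∃ C > 0, ∀ x, S.ν x ≤ C * ‖x‖ := by
  have hsum : ∀ (s : Finset (Fin d)) (f : Fin d → (Fin d → ℝ)),
      S.ν (∑ i ∈ s, f i) ≤ ∑ i ∈ s, S.ν (f i) := by
    intro s
    induction s using Finset.induction with
    | empty => intro f; simp [(S.ν_eq_zero 0).2 rfl]
    | insert _ _ hnot ih =>
      intro f
      rw [Finset.sum_insert hnot, Finset.sum_insert hnot]
      exact le_trans (S.ν_add _ _) (by linarith [ih f])
  refine ⟨∑ i, S.ν (Pi.single i 1) + 1, by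
    have := Finset.sum_nonneg (fun i (_ : i ∈ Finset.univ) => nu_nonneg S (Pi.single i 1))
    linarith, fun x => ?_⟩
  have hx : x = ∑ i, x i • (Pi.single i 1 : Fin d → ℝ) := by
    funext j
    rw [Finset.sum_apply]
    simp [Pi.single_apply, Finset.sum_ite_eq']
  calc S.ν x = S.ν (∑ i, x i • (Pi.single i 1 : Fin d → ℝ)) := by rw [← hx]
    _ ≤ ∑ i, S.ν (x i • (Pi.single i 1 : Fin d → ℝ)) := hsum _ _
    _ = ∑ i, |x i| * S.ν (Pi.single i 1) :=
        Finset.sum_congr rfl fun i _ => S.ν_smul _ _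
    _ ≤ ∑ i, ‖x‖ * S.ν (Pi.single i 1) := by
        refine Finset.sum_le_sum fun i _ => ?_
        refine mul_le_mul_of_nonneg_right ?_ (nu_nonneg S _)
        simpa [Real.norm_eq_abs] using norm_le_pi_norm x i
    _ = (∑ i, S.ν (Pi.single i 1)) * ‖x‖ := by rw [← Finset.mul_sum, mul_comm]
    _ ≤ (∑ i, S.ν (Pi.single i 1) + 1) * ‖x‖ :=
        mul_le_mul_of_nonneg_right (by linarith) (norm_nonneg _)

lemma nu_cont (S : OSSetup d p) : Continuous S.ν := by
  obtain ⟨C, hC, h⟩ := nu_upper S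
  have hdiff : ∀ x y : Fin d → ℝ, |S.ν x - S.ν y| ≤ C * ‖x - y‖ := by
    intro x y
    rw [abs_sub_le_iff]
    constructor
    · have h1 : S.ν x ≤ S.ν (x - y) + S.ν y := by
        have := S.ν_add (x - y) y
        simpa using this
      have h2 := h (x - y)
      linarith
    · have h1 : S.ν y ≤ S.ν (y - x) + S.ν x := by
        have := S.ν_add (y - x) x
        simpa using this
      have h2 := h (y - x)
      have h3 : ‖y - x‖ = ‖x - y‖ := norm_sub_rev _ _
      rw [h3] at h2
      linarith
  rw [Metric.continuous_iff]
  intro x ε hε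
  refine ⟨ε / C, by positivity, fun y hy => ?_⟩
  rw [Real.dist_eq]
  have hxy : ‖y - x‖ = dist y x := by rw [dist_eq_norm]
  calc |S.ν y - S.ν x| ≤ C * ‖y - x‖ := hdiff y x
    _ < C * (ε / C) := by
        rw [hxy]
        exact mul_lt_mul_of_pos_left hy hC
    _ = ε := by field_simp

lemma nu_lower (S : OSSetup d p) : ∃ C > 0, ∀ x : Fin d → ℝ, ‖x‖ ≤ C * S.ν x := by
  have hsphere : IsCompact (Metric.sphere (0 : Fin d → ℝ) 1) := isCompact_sphere _ _
  have hne : (Metric.sphere (0 : Fin d → ℝ) 1).Nonempty := by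
    refine ⟨Pi.single ⟨0, S.hd⟩ 1, ?_⟩
    simp [Pi.norm_single]
  obtain ⟨x₀, hx₀mem, hx₀min⟩ := hsphere.exists_isMinOn hne (nu_cont S).continuousOn
  have hx₀norm : ‖x₀‖ = 1 := by simpa using hx₀mem
  have hx₀ne : x₀ ≠ 0 := by
    intro h; rw [h] at hx₀norm; simp at hx₀norm
  have hmpos : 0 < S.ν x₀ :=
    lt_of_le_of_ne (nu_nonneg S x₀) (fun h => hx₀ne ((S.ν_eq_zero x₀).1 h.symm))
  refine ⟨(S.ν x₀)⁻¹, by positivity, fun x => ?_⟩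
  rcases eq_or_ne x 0 with rfl | hx
  · simp [(S.ν_eq_zero (0 : Fin d → ℝ)).2 rfl]
  · have hxn : (0:ℝ) < ‖x‖ := norm_pos_iff.2 hx
    have hu : (‖x‖⁻¹ • x) ∈ Metric.sphere (0 : Fin d → ℝ) 1 := by
      simp [norm_smul, abs_of_nonneg (inv_nonneg.2 (norm_nonneg x)),
        inv_mul_cancel₀ (ne_of_gt hxn)]
    have h1 : S.ν x₀ ≤ S.ν (‖x‖⁻¹ • x) := hx₀min hu
    rw [S.ν_smul, abs_of_nonneg (inv_nonneg.2 (norm_nonneg x))] at h1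
    have h2 : ‖x‖ * S.ν x₀ ≤ S.ν x := by
      have := mul_le_mul_of_nonneg_left h1 (le_of_lt hxn)
      rwa [← mul_assoc, mul_inv_cancel₀ (ne_of_gt hxn), one_mul] at this
    rw [← mul_le_mul_iff_right₀ hmpos]
    calc S.ν x₀ * ‖x‖ = ‖x‖ * S.ν x₀ := by ring
      _ ≤ S.ν x := h2
      _ = S.ν x₀ * ((S.ν x₀)⁻¹ * S.ν x) := by
          rw [← mul_assoc, mul_inv_cancel₀ (ne_of_gt hmpos), one_mul]

lemma nu_tau (S : OSSetup d p) {β : ℝ} (hβ0 : 0 < β) (hβ : β < S.a1) :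
    ∃ K > 0, ∀ x, S.τ x ≤ 1 → S.ν x ≤ K * S.τ x ^ β := by
  obtain ⟨C, hC, hdecay⟩ := decay_real S hβ
  obtain ⟨C2, hC2, hup⟩ := nu_upper S
  obtain ⟨C1, hC1, hlow⟩ := nu_lower S
  refine ⟨C2 * C * C1, by positivity, fun x hx => ?_⟩
  rcases eq_or_ne x 0 with rfl | hx0
  · rw [S.τ_zero, Real.zero_rpow (ne_of_gt hβ0)]
    simp [(S.ν_eq_zero (0 : Fin d → ℝ)).2 rfl]
  · have hτ : 0 < S.τ x := S.τ_pos x hx0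
    have hpolar := S.polar x hx0
    have hl : S.ν (S.l x) = 1 := S.l_sphere x hx0
    have h1 : ‖(matPow S.E (S.τ x)).mulVec (S.l x)‖ ≤ C * S.τ x ^ β * ‖S.l x‖ :=
      hdecay (S.τ x) hτ hx (S.l x)
    have h2 : ‖S.l x‖ ≤ C1 := by
      have := hlow (S.l x)
      rw [hl, mul_one] at this
      exact this
    have hrpow : (0:ℝ) ≤ S.τ x ^ β := Real.rpow_nonneg (le_of_lt hτ) β
    calc S.ν x ≤ C2 * ‖x‖ := hup x
      _ = C2 * ‖(matPow S.E (S.τ x)).mulVec (S.l x)‖ := by rw [hpolar]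
      _ ≤ C2 * (C * S.τ x ^ β * ‖S.l x‖) := mul_le_mul_of_nonneg_left h1 (le_of_lt hC2)
      _ ≤ C2 * (C * S.τ x ^ β * C1) := by
          refine mul_le_mul_of_nonneg_left (mul_le_mul_of_nonneg_left h2 ?_) (le_of_lt hC2)
          exact mul_nonneg (le_of_lt hC) hrpow
      _ = C2 * C * C1 * S.τ x ^ β := by ring

lemma lip_ext (S : OSSetup d p) (φ : (Fin d → ℝ) → ℝ) (hcont : Continuous φ)
    {C : ℝ} (hC0 : 0 ≤ C)
    (hlip : ∀ x y : Fin d → ℝ, x ≠ 0 → y ≠ 0 → |φ x - φ y| ≤ C * S.ν (x - y)) :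
    ∀ x y : Fin d → ℝ, |φ x - φ y| ≤ C * S.ν (x - y) := by
  have key : ∀ x : Fin d → ℝ, x ≠ 0 → |φ x - φ 0| ≤ C * S.ν x := by
    intro x hx
    have hev : ∀ᶠ t in 𝓝[>] (0:ℝ), |φ x - φ (t • x)| ≤ C * S.ν x := by
      filter_upwards [Ioo_mem_nhdsGT_of_mem (by norm_num : (0:ℝ) ∈ Set.Ico 0 1)] with t ht
      have ht0 : (0:ℝ) < t := ht.1
      have ht1 : t < 1 := ht.2
      have htx : t • x ≠ 0 := smul_ne_zero (ne_of_gt ht0) hx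
      have h1 := hlip x (t • x) hx htx
      have h2 : x - t • x = (1 - t) • x := by rw [sub_smul, one_smul]
      rw [h2, S.ν_smul, abs_of_nonneg (by linarith : (0:ℝ) ≤ 1 - t)] at h1
      refine le_trans h1 ?_
      have hν := nu_nonneg S x
      nlinarith [mul_nonneg (mul_nonneg hC0 (le_of_lt ht0)) hν]
    have h0 : Filter.Tendsto (fun t : ℝ => t • x) (𝓝[>] (0:ℝ)) (𝓝 ((0:ℝ) • x)) :=
      ((continuous_id.smul continuous_const).tendsto 0).mono_left nhdsWithin_le_nhds
    rw [zero_smul] at h0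
    have hlim : Filter.Tendsto (fun t : ℝ => |φ x - φ (t • x)|) (𝓝[>] (0:ℝ))
        (𝓝 (|φ x - φ 0|)) :=
      (((continuous_const.sub hcont).abs).tendsto 0).comp h0
    exact le_of_tendsto hlim hev
  intro x y
  rcases eq_or_ne x y with rfl | hxy
  · simp [sub_self, (S.ν_eq_zero (0 : Fin d → ℝ)).2 rfl]
  rcases eq_or_ne x 0 with rfl | hx0
  · rcases eq_or_ne y 0 with rfl | hy0
    · exact absurd rfl hxy
    · have hk := key y hy0
      have hsym : |φ 0 - φ y| = |φ y - φ 0| := abs_sub_comm _ _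
      have hνsym : S.ν ((0 : Fin d → ℝ) - y) = S.ν y := by
        have he : (0:Fin d → ℝ) - y = (-1 : ℝ) • y := by
          funext i; simp
        rw [he, S.ν_smul]; simp
      rw [hsym, hνsym]
      exact hk
  rcases eq_or_ne y 0 with rfl | hy0
  · have hk := key x hx0
    simpa using hk
  exact hlip x y hx0 hy0

end StmtSixAux

/-- Remark 2.7: a continuous function `φ : ℝ^d → [0,∞)` that is positive and Lipschitz
(w.r.t. `‖·‖₀`) on `ℝ^d \ {0}` is `(β,E)`-admissible for every `0 < β < a₁`. -/
theorem stmt_6 {d p : ℕ} (S : OSSetup d p) (φ : (Fin d → ℝ) → ℝ)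
    (hcont : Continuous φ) (hnonneg : ∀ x, 0 ≤ φ x) (hpos : ∀ x, x ≠ 0 → 0 < φ x)
    (hlip : ∃ C > (0 : ℝ), ∀ x y : Fin d → ℝ, x ≠ 0 → y ≠ 0 →
      |φ x - φ y| ≤ C * S.ν (x - y)) :
    ∀ β : ℝ, 0 < β → β < S.a1 → S.Admissible β φ := by
  intro β hβ0 hβ1
  obtain ⟨Cl, hCl, hlip⟩ := hlip
  refine ⟨hβ0, hcont, hnonneg, hpos, fun A B hA hAB => ?_⟩
  obtain ⟨K, hK, hKle⟩ := StmtSixAux.nu_tau S hβ0 hβ1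
  have hext := StmtSixAux.lip_ext S φ hcont (le_of_lt hCl) hlip
  refine ⟨Cl * K, by positivity, fun x y hx _ _ => ?_⟩
  have h1 : |φ (x + y) - φ y| ≤ Cl * S.ν x := by
    have := hext (x + y) y
    simpa [add_sub_cancel_right] using this
  have h2 : S.ν x ≤ K * S.τ x ^ β := hKle x hx
  calc |φ (x + y) - φ y| ≤ Cl * S.ν x := h1
    _ ≤ Cl * (K * S.τ x ^ β) := mul_le_mul_of_nonneg_left h2 (le_of_lt hCl)
    _ = Cl * K * S.τ x ^ β := by ring
end

section
/- Let φ : ℝ^d → [0,∞) be an E-homogeneous, (β,E)-admissible function, let 0 < α ≤ 2 and 0 < H < β, and let q = trace(E). Then for all c > 0, all m ≥ 1, all x₁, ..., x_m ∈ ℝ^d and all t₁, ..., t_m ∈ ℝ: ∫_{ℝ^d} |Σ_{j=1}^m t_j (φ(c^E x_j − y)^{H − q/α} − φ(−y)^{H − q/α})|^α dy = c^{αH} · ∫_{ℝ^d} |Σ_{j=1}^m t_j (φ(x_j − y)^{H − q/α} − φ(−y)^{H − q/α})|^α dy. (Since the finite-dimensional distributions of a symmetric α-stable integral are determined by such L^α-norms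 of the integrand, this expresses the operator scaling property {X_φ(c^E x)} =f.d.= {c^H X_φ(x)} of the moving-average field.) -/
open MeasureTheory Matrix Filter Topology

theorem my_det_exp {d : ℕ} (A : Matrix (Fin d) (Fin d) ℝ) :
    (NormedSpace.exp A).det = Real.exp A.trace := by
  letI : SeminormedRing (Matrix (Fin d) (Fin d) ℝ) := Matrix.linftyOpSemiNormedRing
  letI : NormedRing (Matrix (Fin d) (Fin d) ℝ) := Matrix.linftyOpNormedRing
  letI : NormedAlgebra ℝ (Matrix (Fin d) (Fin d) ℝ) := Matrix.linftyOpNormedAlgebra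
  set k := A.trace with hk
  set f : ℝ → ℝ := fun t => (NormedSpace.exp (t • A)).det with hf
  -- the entry continuous linear maps
  set P : Fin d → Fin d → (Matrix (Fin d) (Fin d) ℝ →L[ℝ] ℝ) := fun i j =>
    LinearMap.toContinuousLinearMap
      ((LinearMap.proj j).comp (LinearMap.proj (R := ℝ) (φ := fun _ : Fin d => Fin d → ℝ) i))
    with hP
  have hPapply : ∀ i j (M : Matrix (Fin d) (Fin d) ℝ), P i j M = M i j := by
    intro i j M; rfl
  -- derivative of det at 1 is the trace
  have hdet1 : HasFDerivAt (fun M : Matrix (Fin d) (Fin d) ℝ => M.det)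
      (LinearMap.toContinuousLinearMap (Matrix.traceLinearMap (Fin d) ℝ ℝ)) 1 := by
    have h1 : ∀ σ : Equiv.Perm (Fin d), HasFDerivAt
        (fun M : Matrix (Fin d) (Fin d) ℝ => ∏ i, M (σ i) i)
        (∑ i, (∏ j ∈ Finset.univ.erase i, (1 : Matrix (Fin d) (Fin d) ℝ) (σ j) j) • P (σ i) i)
        1 := by
      intro σ
      exact HasFDerivAt.finset_prod (fun i _ => by
        exact (P (σ i) i).hasFDerivAt)
    have h2 : HasFDerivAt (fun M : Matrix (Fin d) (Fin d) ℝ => M.det)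
        (∑ σ : Equiv.Perm (Fin d), (Equiv.Perm.sign σ : ℝ) •
          (∑ i, (∏ j ∈ Finset.univ.erase i, (1 : Matrix (Fin d) (Fin d) ℝ) (σ j) j) • P (σ i) i))
        1 := by
      have := HasFDerivAt.sum (u := (Finset.univ : Finset (Equiv.Perm (Fin d))))
        (fun σ _ => (h1 σ).const_smul (Equiv.Perm.sign σ : ℝ))
      refine this.congr_fderiv ?_ |>.congr_of_eventuallyEq ?_
      · rfl
      · filter_upwards with M
        rw [Matrix.det_apply']
        simp [smul_eq_mul]
    refine h2.congr_fderiv ?_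
    ext H
    simp only [ContinuousLinearMap.coe_sum', Finset.sum_apply, ContinuousLinearMap.coe_smul',
      Pi.smul_apply, smul_eq_mul, LinearMap.coe_toContinuousLinearMap,
      Matrix.traceLinearMap_apply]
    simp only [hPapply]
    rw [Finset.sum_eq_single (1 : Equiv.Perm (Fin d))]
    · have h1' : ∀ x : Fin d, (∏ j ∈ Finset.univ.erase x,
          (1 : Matrix (Fin d) (Fin d) ℝ) ((1 : Equiv.Perm (Fin d)) j) j) = 1 :=
        fun x => Finset.prod_eq_one fun j _ => Matrix.one_apply_eq _
      rw [Equiv.Perm.sign_one]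
      simp only [h1', one_mul, Units.val_one, Int.cast_one]
      simp [LinearMap.coe_toContinuousLinearMap', Matrix.trace, Matrix.diag,
        Equiv.Perm.one_apply]
    · intro σ _ hσ
      have : ∀ i : Fin d, (∏ j ∈ Finset.univ.erase i, (1 : Matrix (Fin d) (Fin d) ℝ) (σ j) j) = 0 := by
        intro i
        obtain ⟨kk, hkk⟩ : ∃ kk, σ kk ≠ kk := by
          by_contra h
          push_neg at h
          exact hσ (Equiv.ext h)
        rcases eq_or_ne kk i with rfl | hne
        · refine Finset.prod_eq_zero (i := σ⁻¹ kk) ?_ ?_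
          · simp only [Finset.mem_erase, Finset.mem_univ, and_true]
            intro h
            exact hkk (by conv_lhs => rw [← h]; rw [(show σ (σ⁻¹ kk) = kk from σ.apply_symm_apply kk)])
          · rw [(show σ (σ⁻¹ kk) = kk from σ.apply_symm_apply kk), Matrix.one_apply_ne]
            intro h
            exact hkk (by conv_lhs => rw [h]; rw [(show σ (σ⁻¹ kk) = kk from σ.apply_symm_apply kk)])
        · refine Finset.prod_eq_zero (i := kk) ?_ (Matrix.one_apply_ne hkk)
          simp [hne]
      simp [this]
    · simp
  -- derivative of the exp curve at 0
  have hcurve : HasDerivAt (fun t : ℝ => NormedSpace.exp (t • A)) A 0 := by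
    have := hasDerivAt_exp_smul_const (𝕂 := ℝ) A 0
    simp only [zero_smul, NormedSpace.exp_zero, one_mul] at this
    exact this
  have hone : NormedSpace.exp ((0:ℝ) • A) = 1 := by simp
  have hdet1' : HasFDerivAt (fun M : Matrix (Fin d) (Fin d) ℝ => M.det)
      (LinearMap.toContinuousLinearMap (Matrix.traceLinearMap (Fin d) ℝ ℝ))
      (NormedSpace.exp ((0:ℝ) • A)) := by rw [hone]; exact hdet1
  have hder0 : HasDerivAt f k 0 := by
    have := hdet1'.comp_hasDerivAt 0 hcurve
    exact this
  -- multiplicativity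
  have hmul : ∀ s t : ℝ, f (s + t) = f s * f t := by
    intro s t
    have hcomm : Commute (s • A) (t • A) := ((Commute.refl A).smul_left s).smul_right t
    rw [hf]
    simp only
    rw [add_smul, Matrix.exp_add_of_commute _ _ hcomm, Matrix.det_mul]
  have hderiv_all : ∀ t : ℝ, HasDerivAt f (k * f t) t := by
    intro t
    have h0 : HasDerivAt (fun u : ℝ => f t * f u) (f t * k) 0 := hder0.const_mul (f t)
    have hsub : HasDerivAt (fun x : ℝ => x - t) 1 t := by
      simpa using (hasDerivAt_id t).sub_const t
    have h0' : HasDerivAt (fun u : ℝ => f t * f u) (f t * k) (t - t) := by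
      simpa using h0
    have h2 := HasDerivAt.comp (h₂ := fun u : ℝ => f t * f u) (h := fun x : ℝ => x - t) t h0' hsub
    have heq : ((fun u : ℝ => f t * f u) ∘ (fun x : ℝ => x - t)) = f := by
      funext x
      simp only [Function.comp]
      rw [← hmul t (x - t)]
      ring_nf
    rw [heq] at h2
    rw [show k * f t = f t * k * 1 by ring]
    exact h2
  -- constancy of f t * exp (-k t)
  have hF : ∀ t : ℝ, HasDerivAt (fun u : ℝ => f u * Real.exp (-k * u)) 0 t := by
    intro t
    have hlin : HasDerivAt (fun u : ℝ => -k * u) (-k) t := by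
      simpa using (hasDerivAt_id t).const_mul (-k)
    have he : HasDerivAt (fun u : ℝ => Real.exp (-k * u)) (Real.exp (-k * t) * (-k)) t :=
      hlin.exp
    have := (hderiv_all t).mul he
    rw [show (0:ℝ) = k * f t * Real.exp (-k * t) + f t * (Real.exp (-k * t) * (-k)) by ring]
    exact this
  have hconst : f 1 * Real.exp (-k * 1) = f 0 * Real.exp (-k * 0) :=
    is_const_of_deriv_eq_zero (fun x => (hF x).differentiableAt) (fun x => (hF x).deriv) 1 0
  have hf0 : f 0 = 1 := by
    rw [hf]; simp
  have hf1 : f 1 = (NormedSpace.exp A).det := by rw [hf]; simp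
  rw [hf0, hf1] at hconst
  have hexp : Real.exp (-k * 1) = (Real.exp k)⁻¹ := by
    rw [mul_one, Real.exp_neg]
  rw [hexp] at hconst
  field_simp at hconst
  simpa [mul_comm] using hconst


theorem my_integral_comp_mulVec {d : ℕ} (M : Matrix (Fin d) (Fin d) ℝ) (hM : M.det ≠ 0)
    (g : (Fin d → ℝ) → ℝ) :
    ∫ y, g y = |M.det| * ∫ z, g (M.mulVec z) := by
  have hinv : Invertible M := M.invertibleOfIsUnitDet (isUnit_iff_ne_zero.mpr hM)
  let e₀ : (Fin d → ℝ) ≃ₗ[ℝ] (Fin d → ℝ) := M.toLinearEquiv' hinv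
  let e : (Fin d → ℝ) ≃ᵐ (Fin d → ℝ) :=
    e₀.toContinuousLinearEquiv.toHomeomorph.toMeasurableEquiv
  have hdetL : LinearMap.det (Matrix.toLin' M) ≠ 0 := by
    rw [LinearMap.det_toLin']; exact hM
  have hcoe : (⇑e : (Fin d → ℝ) → (Fin d → ℝ)) = ⇑(Matrix.toLin' M) := by
    funext v
    rfl
  have hmap : (volume : Measure (Fin d → ℝ)).map e = ENNReal.ofReal |M.det|⁻¹ • volume := by
    rw [hcoe]
    have := MeasureTheory.Measure.map_linearMap_addHaar_eq_smul_addHaar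
      (volume : Measure (Fin d → ℝ)) hdetL
    rw [this, LinearMap.det_toLin', abs_inv]
    
  have h1 : ∫ z, g (M.mulVec z) = ∫ y, g y ∂((volume : Measure (Fin d → ℝ)).map e) := by
    rw [MeasureTheory.integral_map_equiv e g]
    refine integral_congr_ae (Filter.Eventually.of_forall fun z => ?_)
    show g (M.mulVec z) = g (e z)
    rw [show e z = M.mulVec z from rfl]
  rw [h1, hmap, integral_smul_measure, ENNReal.toReal_ofReal (by positivity), smul_eq_mul,
    ← mul_assoc, mul_inv_cancel₀ (by simpa using hM), one_mul]

theorem my_det_matPow {d : ℕ} (E : Matrix (Fin d) (Fin d) ℝ) {c : ℝ} (hc : 0 < c) :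
    (matPow E c).det = c ^ E.trace := by
  rw [matPow, my_det_exp, Matrix.trace_smul, Real.rpow_def_of_pos hc, smul_eq_mul]

/-- Corollary 3.2 (a): operator scaling of the moving-average field, expressed via the
`L^α`-norms of the integrands which determine the finite-dimensional distributions:
for all `c > 0`, `x₁,...,x_m` and `t₁,...,t_m`,
`∫ |Σ_j t_j(φ(c^E x_j − y)^{H−q/α} − φ(−y)^{H−q/α})|^α dy
  = c^{αH} ∫ |Σ_j t_j(φ(x_j − y)^{H−q/α} − φ(−y)^{H−q/α})|^α dy`. -/
theorem stmt_11 {d p : ℕ} (S : OSSetup d p) (β α H : ℝ) (φ : (Fin d → ℝ) → ℝ)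
    (hhom : S.EHomogeneous φ) (hadm : S.Admissible β φ)
    (hα0 : 0 < α) (hα2 : α ≤ 2) (hH0 : 0 < H) (hHβ : H < β)
    (c : ℝ) (hc : 0 < c) (m : ℕ) (hm : 1 ≤ m)
    (x : Fin m → (Fin d → ℝ)) (t : Fin m → ℝ) :
    ∫ y, |∑ j, t j * (φ ((matPow S.E c).mulVec (x j) - y) ^ (H - S.E.trace / α)
        - φ (-y) ^ (H - S.E.trace / α))| ^ α
      = c ^ (α * H) *
        ∫ y, |∑ j, t j * (φ (x j - y) ^ (H - S.E.trace / α)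
          - φ (-y) ^ (H - S.E.trace / α))| ^ α := by
  obtain ⟨hβ0, hφc, hφ0, hφpos, hadm'⟩ := hadm
  set q : ℝ := S.E.trace with hq
  set ee : ℝ := H - q / α with hee
  set M := matPow S.E c with hMdef
  have hdet : M.det = c ^ q := my_det_matPow S.E hc
  have hdetpos : 0 < M.det := by rw [hdet]; exact Real.rpow_pos_of_pos hc _
  haveI : Nonempty (Fin d) := ⟨⟨0, S.hd⟩⟩
  have hNull : (volume : Measure (Fin d → ℝ)) (insert 0 (Set.range x)) = 0 :=
    ((Set.finite_range x).insert 0).measure_zero _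
  have key : ∀ᵐ z : (Fin d → ℝ) ∂volume,
      |∑ j, t j * (φ (M.mulVec (x j) - M.mulVec z) ^ ee - φ (-(M.mulVec z)) ^ ee)| ^ α
      = c ^ (α * H - q) * |∑ j, t j * (φ (x j - z) ^ ee - φ (-z) ^ ee)| ^ α := by
    filter_upwards [measure_eq_zero_iff_ae_notMem.mp hNull] with z hz
    have hz0 : z ≠ 0 := fun h => hz (by simp [h])
    have hzx : ∀ j, x j - z ≠ 0 := by
      intro j h
      exact hz (Set.mem_insert_iff.mpr (Or.inr ⟨j, sub_eq_zero.mp h⟩))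
    have h1 : ∀ j, φ (M.mulVec (x j) - M.mulVec z) = c * φ (x j - z) := by
      intro j
      rw [← Matrix.mulVec_sub]
      exact hhom c hc _ (hzx j)
    have h2 : φ (-(M.mulVec z)) = c * φ (-z) := by
      rw [← Matrix.mulVec_neg]
      exact hhom c hc _ (neg_ne_zero.mpr hz0)
    calc |∑ j, t j * (φ (M.mulVec (x j) - M.mulVec z) ^ ee - φ (-(M.mulVec z)) ^ ee)| ^ α
        = |∑ j, t j * ((c * φ (x j - z)) ^ ee - (c * φ (-z)) ^ ee)| ^ α := by
          simp only [h1, h2]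
      _ = |c ^ ee * ∑ j, t j * (φ (x j - z) ^ ee - φ (-z) ^ ee)| ^ α := by
          rw [Finset.mul_sum]
          congr 2
          refine Finset.sum_congr rfl fun j _ => ?_
          rw [Real.mul_rpow hc.le (hφ0 _), Real.mul_rpow hc.le (hφ0 _)]
          ring
      _ = (c ^ ee) ^ α * |∑ j, t j * (φ (x j - z) ^ ee - φ (-z) ^ ee)| ^ α := by
          rw [abs_mul, abs_of_pos (Real.rpow_pos_of_pos hc ee),
            Real.mul_rpow (Real.rpow_pos_of_pos hc ee).le (abs_nonneg _)]
      _ = c ^ (α * H - q) * |∑ j, t j * (φ (x j - z) ^ ee - φ (-z) ^ ee)| ^ α := by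
          rw [← Real.rpow_mul hc.le]
          congr 1
          rw [hee]
          field_simp
  rw [my_integral_comp_mulVec M (ne_of_gt hdetpos), integral_congr_ae key,
    integral_const_mul, abs_of_pos hdetpos, hdet, ← mul_assoc, ← Real.rpow_add hc,
    show q + (α * H - q) = α * H by ring]
end

section
/- Let ψ : ℝ^d → [0,∞) be continuous and Eᵗ-homogeneous (where Eᵗ is the transpose of E) with ψ(ξ) > 0 for all ξ ≠ 0, let 0 < α ≤ 2, 0 < H < a₁, and q = trace(E). Then for all c > 0, all m ≥ 1, all x₁, ..., x_m ∈ ℝ^d and all t₁, ..., t_m ∈ ℝ: ∫_{ℝ^d} |Σ_{j=1}^m t_j (e^{i⟨c^E x_j, ξ⟩} − 1)|^α ψ(ξ)^{−αH − q} dξ = c^{αH} · ∫_{ℝ^d} |Σ_{j=1}^m t_j (e^{i⟨x_j, ξ⟩} − 1)|^α ψ(ξ)^{−αH − q} dξ. (Since the finite-dimensional characteristic functions of the harmonizable SαS field are exp(−c₀ times such integrals), this expresses the operator scaling property {X_ψ(c^E x)} =f.d.= {c^H X_ψ(x)}.) -/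
open MeasureTheory Matrix Filter Topology

section AuxDetExp
open Matrix NormedSpace
variable {n : ℕ}

noncomputable def detCML (n : ℕ) : ContinuousMultilinearMap ℝ (fun _ : Fin n => (Fin n → ℝ)) ℝ :=
  MultilinearMap.mkContinuous
    (Matrix.detRowAlternating (n := Fin n) (R := ℝ)).toMultilinearMap
    ((Nat.factorial n : ℕ) : ℝ) (by
      intro v
      have hv : ∀ (σ : Equiv.Perm (Fin n)), |∏ i, v (σ i) i| ≤ ∏ i, ‖v i‖ := by
        intro σ
        calc |∏ i, v (σ i) i| = ∏ i, |v (σ i) i| := by rw [Finset.abs_prod]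
        _ ≤ ∏ i, ‖v (σ i)‖ := by
            apply Finset.prod_le_prod (fun i _ => abs_nonneg _)
            intro i _
            exact norm_le_pi_norm (v (σ i)) i
        _ = ∏ i, ‖v i‖ := Equiv.prod_comp σ (fun i => ‖v i‖)
      have : ‖(Matrix.of v).det‖ ≤ ((Nat.factorial n : ℕ) : ℝ) * ∏ i, ‖v i‖ := by
        rw [Matrix.det_apply]
        calc ‖∑ σ : Equiv.Perm (Fin n), Equiv.Perm.sign σ • ∏ i, Matrix.of v (σ i) i‖
            ≤ ∑ σ : Equiv.Perm (Fin n), ‖Equiv.Perm.sign σ • ∏ i, Matrix.of v (σ i) i‖ :=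
              norm_sum_le _ _
        _ ≤ ∑ σ : Equiv.Perm (Fin n), ∏ i, ‖v i‖ := by
            apply Finset.sum_le_sum
            intro σ _
            have : ‖Equiv.Perm.sign σ • ∏ i, Matrix.of v (σ i) i‖
                = |∏ i, v (σ i) i| := by
              rcases Int.units_eq_one_or (Equiv.Perm.sign σ) with h | h <;>
                simp [h, Real.norm_eq_abs, Matrix.of_apply, Finset.abs_prod]
            rw [this]; exact hv σ
        _ = ((Nat.factorial n : ℕ) : ℝ) * ∏ i, ‖v i‖ := by
            rw [Finset.sum_const, Finset.card_univ, Fintype.card_perm]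
            simp [nsmul_eq_mul]
      exact this)

lemma detCML_apply (v : Fin n → (Fin n → ℝ)) : detCML n v = (Matrix.of v).det := by
  simp only [detCML, MultilinearMap.coe_mkContinuous]
  rfl

lemma det_updateRow_one (i : Fin n) (r : Fin n → ℝ) :
    ((1 : Matrix (Fin n) (Fin n) ℝ).updateRow i r).det = r i := by
  have h : (∑ k, r k • (1 : Matrix (Fin n) (Fin n) ℝ) k) = r := by
    funext j
    simp [Matrix.one_apply, Finset.sum_ite_eq']
  calc ((1 : Matrix (Fin n) (Fin n) ℝ).updateRow i r).det
      = ((1 : Matrix (Fin n) (Fin n) ℝ).updateRow i (∑ k, r k • (1 : Matrix (Fin n) (Fin n) ℝ) k)).det := by rw [h]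
    _ = r i • (1 : Matrix (Fin n) (Fin n) ℝ).det := Matrix.det_updateRow_sum _ _ _
    _ = r i := by simp

lemma hasDerivAt_exp_entry (A : Matrix (Fin n) (Fin n) ℝ) (i j : Fin n) :
    HasDerivAt (fun t : ℝ => exp (t • A) i j) (A i j) 0 := by
  letI : SeminormedRing (Matrix (Fin n) (Fin n) ℝ) := Matrix.linftyOpSemiNormedRing
  letI : NormedRing (Matrix (Fin n) (Fin n) ℝ) := Matrix.linftyOpNormedRing
  letI : NormedAlgebra ℝ (Matrix (Fin n) (Fin n) ℝ) := Matrix.linftyOpNormedAlgebra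
  have h : HasDerivAt (fun t : ℝ => exp (t • A)) A 0 := by
    have h0 := hasDerivAt_exp_smul_const A (0 : ℝ)
    simp only [zero_smul, NormedSpace.exp_zero, one_mul] at h0
    exact h0
  let f : Matrix (Fin n) (Fin n) ℝ →ₗ[ℝ] ℝ :=
    (LinearMap.proj j).comp (LinearMap.proj (R := ℝ) (φ := fun _ : Fin n => (Fin n → ℝ)) i)
  have hf : HasFDerivAt f.toContinuousLinearMap (f.toContinuousLinearMap)
      (exp ((0:ℝ) • A)) := f.toContinuousLinearMap.hasFDerivAt
  have := hf.comp_hasDerivAt (0:ℝ) h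
  exact this

lemma hasDerivAt_det_exp_zero (A : Matrix (Fin n) (Fin n) ℝ) :
    HasDerivAt (fun t : ℝ => (exp (t • A)).det) A.trace 0 := by
  classical
  have hrows : HasDerivAt (fun t : ℝ => (fun i : Fin n => exp (t • A) i))
      (fun i : Fin n => A i) 0 := by
    rw [hasDerivAt_pi]
    intro i
    rw [hasDerivAt_pi]
    intro j
    exact hasDerivAt_exp_entry A i j
  have h1 : (fun i : Fin n => exp ((0:ℝ) • A) i) = (fun i : Fin n => (1 : Matrix (Fin n) (Fin n) ℝ) i) := by
    simp
  have hdet := ((detCML n).hasFDerivAt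
      (fun i : Fin n => exp ((0:ℝ) • A) i)).comp_hasDerivAt (0:ℝ) hrows
  rw [h1] at hdet
  have hval : ((detCML n).linearDeriv (fun i : Fin n => (1 : Matrix (Fin n) (Fin n) ℝ) i))
      (fun i : Fin n => A i) = A.trace := by
    rw [ContinuousMultilinearMap.linearDeriv_apply]
    have : ∀ i : Fin n, (detCML n) (Function.update (fun i : Fin n => (1 : Matrix (Fin n) (Fin n) ℝ) i) i (A i)) = A i i := by
      intro i
      rw [show (detCML n) (Function.update (fun i : Fin n => (1 : Matrix (Fin n) (Fin n) ℝ) i) i (A i))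
          = ((1 : Matrix (Fin n) (Fin n) ℝ).updateRow i (A i)).det from rfl]
      exact det_updateRow_one i (A i)
    rw [Finset.sum_congr rfl (fun i _ => this i)]
    rfl
  rw [hval] at hdet
  exact hdet

lemma det_exp (A : Matrix (Fin n) (Fin n) ℝ) :
    (exp A).det = Real.exp A.trace := by
  have key : ∀ t : ℝ, (exp (t • A)).det = Real.exp (t * A.trace) := by
    set g : ℝ → ℝ := fun t => (exp (t • A)).det with hg
    have hmul : ∀ s t : ℝ, g (s + t) = g s * g t := by
      intro s t
      have hcomm : Commute (s • A) (t • A) := ((Commute.refl A).smul_left s).smul_right t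
      rw [hg]
      simp only
      rw [add_smul, Matrix.exp_add_of_commute _ _ hcomm, Matrix.det_mul]
    have hd : ∀ t : ℝ, HasDerivAt g (g t * A.trace) t := by
      intro t
      have h0 : HasDerivAt g A.trace 0 := hasDerivAt_det_exp_zero A
      have hgu : ∀ u : ℝ, g u = g t * g (u - t) := by
        intro u
        have h := hmul t (u - t)
        have h' : t + (u - t) = u := by ring
        rwa [h'] at h
      have h1 : HasDerivAt (fun u : ℝ => g (u - t)) A.trace t := by
        apply HasDerivAt.comp_sub_const
        simpa using h0
      have h2 : HasDerivAt (fun u : ℝ => g t * g (u - t)) (g t * A.trace) t :=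
        h1.const_mul (g t)
      exact h2.congr_of_eventuallyEq (Filter.Eventually.of_forall hgu)
    set F : ℝ → ℝ := fun t => g t * Real.exp (-(t * A.trace)) with hF
    have hdF : ∀ t : ℝ, HasDerivAt F 0 t := by
      intro t
      have he : HasDerivAt (fun t : ℝ => Real.exp (-(t * A.trace))) (-A.trace * Real.exp (-(t * A.trace))) t := by
        have h3 : HasDerivAt (fun t : ℝ => -(t * A.trace)) (-A.trace) t := by
          have := ((hasDerivAt_id t).mul_const A.trace).neg
          simp only [id, one_mul] at this
          exact this
        convert h3.exp using 1
        ring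
      have := (hd t).mul he
      refine this.congr_deriv ?_
      ring
    have hconst : ∀ t : ℝ, F t = F 0 := by
      intro t
      apply is_const_of_deriv_eq_zero (f := F)
      · exact fun u => (hdF u).differentiableAt
      · exact fun u => (hdF u).deriv
    intro t
    have h0 : F 0 = 1 := by simp [hF, hg]
    have ht := (hconst t).trans h0
    have hexp : Real.exp (-(t * A.trace)) ≠ 0 := Real.exp_ne_zero _
    have ht' : g t * Real.exp (-(t * A.trace)) = 1 := ht
    have h4 : g t * (Real.exp (-(t * A.trace)) * Real.exp (t * A.trace))
        = Real.exp (t * A.trace) := by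
      rw [← mul_assoc, ht', one_mul]
    rwa [← Real.exp_add, neg_add_cancel, Real.exp_zero, mul_one] at h4
  simpa using key 1

open MeasureTheory in
lemma integral_comp_mulVec {d : ℕ} (M : Matrix (Fin d) (Fin d) ℝ) (hM : M.det ≠ 0)
    (g : (Fin d → ℝ) → ℝ) (hg : AEStronglyMeasurable g (volume : Measure (Fin d → ℝ))) :
    ∫ ξ : Fin d → ℝ, g (M.mulVec ξ) = |M.det|⁻¹ * ∫ ξ : Fin d → ℝ, g ξ := by
  have hLdet : LinearMap.det (Matrix.toLin' M) = M.det := LinearMap.det_toLin' M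
  have hmap := Measure.map_linearMap_addHaar_eq_smul_addHaar
    (volume : Measure (Fin d → ℝ)) (f := Matrix.toLin' M) (by rw [hLdet]; exact hM)
  have hmeas : AEMeasurable (⇑(Matrix.toLin' M)) (volume : Measure (Fin d → ℝ)) :=
    ((Matrix.toLin' M).continuous_of_finiteDimensional).measurable.aemeasurable
  have hg' : AEStronglyMeasurable g
      (Measure.map (⇑(Matrix.toLin' M)) (volume : Measure (Fin d → ℝ))) := by
    rw [hmap]
    exact hg.mono_ac Measure.smul_absolutelyContinuous
  calc ∫ ξ : Fin d → ℝ, g (M.mulVec ξ)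
      = ∫ ξ : Fin d → ℝ, g (Matrix.toLin' M ξ) := by simp [Matrix.toLin'_apply]
    _ = ∫ η, g η ∂(Measure.map (⇑(Matrix.toLin' M)) volume) := (integral_map hmeas hg').symm
    _ = |M.det|⁻¹ * ∫ ξ, g ξ := by
        rw [hmap, integral_smul_measure, hLdet, smul_eq_mul,
          ENNReal.toReal_ofReal (abs_nonneg _), abs_inv]

end AuxDetExp

/-- Corollary 4.2 (a): operator scaling of the harmonizable field, expressed via the
integrals appearing in the finite-dimensional characteristic functions: for all `c > 0`,
`x₁,...,x_m` and `t₁,...,t_m`,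
`∫ |Σ_j t_j(e^{i⟨c^E x_j, ξ⟩} − 1)|^α ψ(ξ)^{−αH−q} dξ
  = c^{αH} ∫ |Σ_j t_j(e^{i⟨x_j, ξ⟩} − 1)|^α ψ(ξ)^{−αH−q} dξ`. -/
theorem stmt_15 {d p : ℕ} (S : OSSetup d p) (ψ : (Fin d → ℝ) → ℝ)
    (hcont : Continuous ψ) (hnonneg : ∀ ξ, 0 ≤ ψ ξ) (hpos : ∀ ξ, ξ ≠ 0 → 0 < ψ ξ)
    (hhom : ∀ c > (0 : ℝ), ∀ ξ : Fin d → ℝ, ξ ≠ 0 →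
      ψ ((matPow S.E.transpose c).mulVec ξ) = c * ψ ξ)
    (α H : ℝ) (hα0 : 0 < α) (hα2 : α ≤ 2) (hH0 : 0 < H) (hH : H < S.a1)
    (c : ℝ) (hc : 0 < c) (m : ℕ) (hm : 1 ≤ m)
    (x : Fin m → (Fin d → ℝ)) (t : Fin m → ℝ) :
    ∫ ξ, ‖∑ j, (t j : ℂ) *
          (Complex.exp (Complex.I * (((matPow S.E c).mulVec (x j) ⬝ᵥ ξ : ℝ) : ℂ)) - 1)‖ ^ α *
        ψ ξ ^ (-(α * H) - S.E.trace)
      = c ^ (α * H) *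
        ∫ ξ, ‖∑ j, (t j : ℂ) *
            (Complex.exp (Complex.I * ((x j ⬝ᵥ ξ : ℝ) : ℂ)) - 1)‖ ^ α *
          ψ ξ ^ (-(α * H) - S.E.trace) := by
  classical
  have hd0 : Nonempty (Fin d) := ⟨⟨0, S.hd⟩⟩
  set q : ℝ := S.E.trace with hq
  set rr : ℝ := -(α * H) - q with hrr
  set M : Matrix (Fin d) (Fin d) ℝ := matPow S.E.transpose c with hMdef
  have hdet : M.det = Real.exp (Real.log c * q) := by
    rw [hMdef, matPow, det_exp, Matrix.trace_smul, Matrix.trace_transpose, smul_eq_mul, hq]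
  have hdet_pos : 0 < M.det := by rw [hdet]; exact Real.exp_pos _
  have habsdet : |M.det| = c ^ q := by
    rw [abs_of_pos hdet_pos, hdet, Real.rpow_def_of_pos hc]
  have hdot : ∀ (v ξ : Fin d → ℝ), (matPow S.E c).mulVec v ⬝ᵥ ξ = v ⬝ᵥ M.mulVec ξ := by
    intro v ξ
    have ht : M = (matPow S.E c).transpose := by
      rw [hMdef, matPow, matPow, ← Matrix.transpose_smul, Matrix.exp_transpose]
    rw [ht, Matrix.mulVec_transpose, dotProduct_comm ((matPow S.E c).mulVec v) ξ,
      dotProduct_mulVec, dotProduct_comm]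
  set g : (Fin d → ℝ) → ℝ := fun η =>
    ‖∑ j, (t j : ℂ) * (Complex.exp (Complex.I * ((x j ⬝ᵥ η : ℝ) : ℂ)) - 1)‖ ^ α *
      ψ η ^ rr with hgdef
  have hgmeas : MeasureTheory.AEStronglyMeasurable g (volume : Measure (Fin d → ℝ)) := by
    apply Measurable.aestronglyMeasurable
    have h1 : Measurable fun η : Fin d → ℝ => ψ η ^ rr := by
      have := hcont.measurable
      fun_prop
    have h2 : Continuous fun η : Fin d → ℝ =>
        ‖∑ j, (t j : ℂ) * (Complex.exp (Complex.I * ((x j ⬝ᵥ η : ℝ) : ℂ)) - 1)‖ := by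
      apply continuous_norm.comp
      apply continuous_finset_sum
      intro j _
      apply Continuous.mul continuous_const
      apply Continuous.sub _ continuous_const
      apply Complex.continuous_exp.comp
      apply Continuous.mul continuous_const
      have hdp : Continuous fun η : Fin d → ℝ => x j ⬝ᵥ η :=
        continuous_finset_sum _ fun k _ => continuous_const.mul (continuous_apply k)
      exact Complex.continuous_ofReal.comp hdp
    exact ((h2.rpow_const (fun η => Or.inr (le_of_lt hα0))).measurable).mul h1
  have h0ae : ∀ᵐ ξ : Fin d → ℝ, ξ ≠ (0 : Fin d → ℝ) := by
    refine MeasureTheory.ae_iff.2 ?_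
    have : {a : Fin d → ℝ | ¬a ≠ 0} = {(0 : Fin d → ℝ)} := by
      ext a; simp
    rw [this]
    exact measure_singleton 0
  have key : ∀ᵐ ξ : Fin d → ℝ,
      ‖∑ j, (t j : ℂ) *
          (Complex.exp (Complex.I * (((matPow S.E c).mulVec (x j) ⬝ᵥ ξ : ℝ) : ℂ)) - 1)‖ ^ α *
        ψ ξ ^ (-(α * H) - S.E.trace)
      = c ^ (α * H + q) * g (M.mulVec ξ) := by
    filter_upwards [h0ae] with ξ hξ
    have hψ : ψ (M.mulVec ξ) = c * ψ ξ := hhom c hc ξ hξ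
    have hψξ : 0 < ψ ξ := hpos ξ hξ
    have hψr : ψ ξ ^ rr = c ^ (α * H + q) * ψ (M.mulVec ξ) ^ rr := by
      rw [hψ, Real.mul_rpow (le_of_lt hc) (le_of_lt hψξ), ← mul_assoc]
      rw [← Real.rpow_add hc]
      have : α * H + q + rr = 0 := by rw [hrr]; ring
      rw [this, Real.rpow_zero, one_mul]
    have hdot' : (fun j : Fin m => (t j : ℂ) *
          (Complex.exp (Complex.I * (((matPow S.E c).mulVec (x j) ⬝ᵥ ξ : ℝ) : ℂ)) - 1))
        = fun j : Fin m => (t j : ℂ) *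
          (Complex.exp (Complex.I * ((x j ⬝ᵥ M.mulVec ξ : ℝ) : ℂ)) - 1) := by
      funext j; rw [hdot]
    rw [show (-(α * H) - S.E.trace : ℝ) = rr from by rw [hrr, hq], hdot', hψr, hgdef]
    ring
  rw [MeasureTheory.integral_congr_ae key, MeasureTheory.integral_const_mul,
    integral_comp_mulVec M (ne_of_gt hdet_pos) g hgmeas, habsdet]
  have hfinal : c ^ (α * H + q) * (c ^ q)⁻¹ = c ^ (α * H) := by
    rw [Real.rpow_add hc, mul_assoc, mul_inv_cancel₀ (ne_of_gt (Real.rpow_pos_of_pos hc q)),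
      mul_one]
  rw [← mul_assoc, hfinal]
end
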